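/- arXiv:1707.01843 — 6 statements merged into one kernel-verified Lean document; each statement's English description precedes it below -/
import Mathlib

section
/- Let a ∈ ℝ with a < -1, let f_a(z) = e^z + a, and let ζ be the unique real number with ζ < 0 and e^ζ + a = ζ. Let B = {z ∈ ℂ : f_a^n(z) → ζ as n → ∞} be the basin of attraction of ζ (which equals the Fatou set of f_a). Then the set ((ℂ \ B) \ I(f_a)) ∪ {∞}, i.e. the set of non-escaping points of the Julia set together with ∞, is a totally separated subspace of the one-point compactification ℂ ∪ {∞}. -/
open Filter Set Metric Bornology

/-- The exponential map `f_a(z) = e^z + a`. -/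
noncomputable def expMap (a : ℂ) : ℂ → ℂ := fun z => Complex.exp z + a

/-- The escaping set `I(f_a) = {z : |f_a^n(z)| → ∞}`. -/
def escapingSet (a : ℂ) : Set ℂ :=
  {z | Tendsto (fun n => ‖(expMap a)^[n] z‖) atTop atTop}

/-- The maximum modulus `M(r, f_a) = max_{|z| = r} |e^z + a|`. -/
noncomputable def maxMod (a : ℂ) (r : ℝ) : ℝ :=
  sSup ((fun z => ‖expMap a z‖) '' Metric.sphere (0 : ℂ) r)

/-- The fast escaping set `A(f_a)`. -/
def fastEscapingSet (a : ℂ) : Set ℂ :=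
  {z | ∀ R > (0 : ℝ), ∃ l : ℕ, ∀ n : ℕ, (maxMod a)^[n] R ≤ ‖(expMap a)^[n + l] z‖}

/-- The set `A_R(f_a) = {z : |f_a^n(z)| ≥ M^n(R, f_a) for all n}`. -/
def levelFastSet (a : ℂ) (R : ℝ) : Set ℂ :=
  {z | ∀ n : ℕ, (maxMod a)^[n] R ≤ ‖(expMap a)^[n] z‖}

/-- The model growth function `F(t) = e^t - 1`. -/
noncomputable def Fgrowth : ℝ → ℝ := fun t => Real.exp t - 1

/-- The cycle `{p, f_a(p), …, f_a^{m-1}(p)}`. -/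
def cycleSet (a p : ℂ) (m : ℕ) : Set ℂ := {w | ∃ k < m, (expMap a)^[k] p = w}

/-- The basin of attraction of a set `C`: points whose orbits converge to `C`. -/
def basin (a : ℂ) (C : Set ℂ) : Set ℂ :=
  {z | Tendsto (fun k => Metric.infDist ((expMap a)^[k] z) C) atTop (nhds 0)}

/-- A topological space is totally separated if any two distinct points can be
separated by a clopen set containing the first but not the second. -/
def TotallySeparatedClopen (X : Type*) [TopologicalSpace X] : Prop :=
  ∀ a b : X, a ≠ b → ∃ U : Set X, IsClopen U ∧ a ∈ U ∧ b ∉ U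

/-- `z₀` is on a hair: there is an injective continuous arc through `z₀`
contained in the escaping set. -/
def OnHair (a z₀ : ℂ) : Prop :=
  ∃ γ : ℝ → ℂ, ContinuousOn γ (Set.Icc (-1) 1) ∧ Set.InjOn γ (Set.Icc (-1) 1) ∧
    γ 0 = z₀ ∧ ∀ t ∈ Set.Icc (-1 : ℝ) 1, γ t ∈ escapingSet a

/-- `z₀` is an endpoint: it is not on a hair, and there is an arc starting at `z₀`
which lies in the escaping set except possibly at `z₀` itself. -/
def IsEndpoint (a z₀ : ℂ) : Prop :=
  ¬ OnHair a z₀ ∧ ∃ γ : ℝ → ℂ, ContinuousOn γ (Set.Icc 0 1) ∧ γ 0 = z₀ ∧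
    ∀ t ∈ Set.Icc (0 : ℝ) 1, 0 < t → γ t ∈ escapingSet a

/-- The set `E(f_a)` of endpoints. -/
def endpoints (a : ℂ) : Set ℂ := {z | IsEndpoint a z}

/-- `E` separates the set `X` from `∞`: in the subspace `(ℂ \ E) ∪ X ∪ {∞}` of the
one-point compactification, there is a clopen set containing `X` but not `∞`. -/
def SeparatesFromInfty (E X : Set ℂ) : Prop :=
  ∃ U : Set ↥(((fun z : ℂ => (z : OnePoint ℂ)) '' (Eᶜ ∪ X)) ∪ {OnePoint.infty}),
    IsClopen U ∧
    (∀ x : ↥(((fun z : ℂ => (z : OnePoint ℂ)) '' (Eᶜ ∪ X)) ∪ {OnePoint.infty}),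
      (x : OnePoint ℂ) ∈ (fun z : ℂ => (z : OnePoint ℂ)) '' X → x ∈ U) ∧
    (∀ x : ↥(((fun z : ℂ => (z : OnePoint ℂ)) '' (Eᶜ ∪ X)) ∪ {OnePoint.infty}),
      (x : OnePoint ℂ) = OnePoint.infty → x ∉ U)

/-- There is an exhausting sequence of bounded simply connected domains whose
boundaries lie in `E`. -/
def SpiderWebSeq (E : Set ℂ) : Prop :=
  ∃ G : ℕ → Set ℂ,
    (∀ n, IsOpen (G n) ∧ IsConnected (G n) ∧ IsBounded (G n) ∧ SimplyConnectedSpace (G n)) ∧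
    (∀ n, G n ⊆ G (n + 1)) ∧ (∀ n, frontier (G n) ⊆ E) ∧ (⋃ n, G n) = Set.univ

/-- `E` is a spider's web: `E` is connected and admits an exhausting sequence of
bounded simply connected domains with boundaries in `E`. -/
def IsSpidersWeb (E : Set ℂ) : Prop := IsConnected E ∧ SpiderWebSeq E

section
variable {a ζ t₀ : ℝ}
open Filter Set Metric Bornology

namespace NTS

variable {a ζ : ℝ}

/-- growth function -/
noncomputable def P (a : ℝ) (s : ℝ) : ℝ := Real.exp s + (-a)

noncomputable def rr (a : ℝ) : ℝ := 1 + 1/a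

def Bset (a ζ : ℝ) : Set ℂ :=
  {z : ℂ | Tendsto (fun n => (expMap (a : ℂ))^[n] z) atTop (nhds (ζ : ℂ))}

noncomputable def Kset (a : ℝ) : Set ℂ := {z : ℂ | z.re ≤ rr a ∨ Real.cos z.im ≤ 0}

lemma expMap_apply (z : ℂ) : expMap (a : ℂ) z = Complex.exp z + (a : ℂ) := rfl

lemma contF : Continuous (expMap (a : ℂ)) := Complex.continuous_exp.add continuous_const

lemma contFiter (j : ℕ) : Continuous ((expMap (a : ℂ))^[j]) := Continuous.iterate contF j

lemma re_expMap (z : ℂ) : (expMap (a : ℂ) z).re = Real.exp z.re * Real.cos z.im + a := by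
  simp [expMap_apply, Complex.exp_re]

lemma expMap_sub_a (z : ℂ) : expMap (a : ℂ) z - (a : ℂ) = Complex.exp z := by
  simp [expMap_apply]

lemma abs_expMap_sub_a (z : ℂ) :
    ‖expMap (a : ℂ) z - (a : ℂ)‖ = Real.exp z.re := by
  rw [expMap_sub_a, Complex.norm_exp]

lemma ha_neg (ha : a < -1) : a < 0 := ha.trans (by norm_num)

lemma re_expMap_le (z : ℂ) : (expMap (a : ℂ) z).re ≤ Real.exp z.re + a := by
  rw [re_expMap]
  have := mul_le_of_le_one_right (Real.exp_pos z.re).le (Real.cos_le_one z.im)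
  linarith

lemma abs_expMap_le (ha : a < -1) (z : ℂ) :
    ‖expMap (a : ℂ) z‖ ≤ P a (‖z‖) := by
  have h1 : ‖expMap (a : ℂ) z‖ ≤ ‖Complex.exp z‖ + ‖(a : ℂ)‖ :=
    norm_add_le _ _
  have h2 : ‖Complex.exp z‖ = Real.exp z.re := Complex.norm_exp z
  have h3 : ‖(a : ℂ)‖ = -a := by
    rw [Complex.norm_real, Real.norm_eq_abs, abs_of_neg (ha_neg ha)]
  have h4 : z.re ≤ ‖z‖ := Complex.re_le_norm z
  have h5 : Real.exp z.re ≤ Real.exp (‖z‖) := Real.exp_le_exp.mpr h4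
  simp only [P]
  linarith

lemma P_mono (ha : a < -1) : Monotone (P a) := fun s s' h => by
  simp only [P]; have := Real.exp_le_exp.mpr h; linarith

lemma le_P (ha : a < -1) (s : ℝ) : s + 1 ≤ P a s := by
  have := Real.add_one_le_exp s
  simp only [P]; linarith

lemma P_pos (ha : a < -1) (s : ℝ) : 0 < P a s := by
  have := Real.exp_pos s
  simp only [P]; linarith

lemma iter_growth (ha : a < -1) (j : ℕ) (z : ℂ) :
    ‖(expMap (a : ℂ))^[j] z‖ ≤ (P a)^[j] (‖z‖) := by
  induction j generalizing z with
  | zero => simp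
  | succ n ih =>
    rw [Function.iterate_succ_apply', Function.iterate_succ_apply']
    exact (abs_expMap_le ha _).trans (P_mono ha (ih z))

lemma P_iter_mono (ha : a < -1) (j : ℕ) : Monotone ((P a)^[j]) :=
  Monotone.iterate (P_mono ha) j

lemma le_P_iter (ha : a < -1) (j : ℕ) (s : ℝ) : s + j ≤ (P a)^[j] s := by
  induction j with
  | zero => simp
  | succ n ih =>
    rw [Function.iterate_succ_apply']
    have h2 : (P a)^[n] s + 1 ≤ P a ((P a)^[n] s) := le_P ha _
    push_cast
    linarith

/-- Mean value bound for exp on a half-plane. -/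
lemma expLip {c : ℝ} {z w : ℂ} (hz : z.re ≤ c) (hw : w.re ≤ c) :
    ‖Complex.exp z - Complex.exp w‖ ≤ Real.exp c * ‖z - w‖ := by
  have := Convex.norm_image_sub_le_of_norm_hasDerivWithin_le
    (f := Complex.exp) (f' := Complex.exp) (s := {v : ℂ | v.re ≤ c}) (C := Real.exp c)
    (fun x _ => (Complex.hasDerivAt_exp x).hasDerivWithinAt)
    (fun x hx => by
      simpa [Complex.norm_exp] using Real.exp_le_exp.mpr hx)
    (convex_halfSpace_re_le c) hw hz
  simpa using this

end NTS

end

section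
variable {a ζ : ℝ}
open NTS Filter Set Metric Bornology

namespace NTS

lemma fixedPoint (hfix : Real.exp ζ + a = ζ) : expMap (a : ℂ) (ζ : ℂ) = (ζ : ℂ) := by
  rw [expMap_apply, ← Complex.ofReal_exp, ← Complex.ofReal_add, hfix]

lemma zeta_lt (ha : a < -1) (hζ : ζ < 0) (hfix : Real.exp ζ + a = ζ) : ζ ≤ 1 + a := by
  have h1 : Real.exp ζ ≤ 1 := by
    rw [← Real.exp_zero]; exact Real.exp_le_exp.mpr hζ.le
  linarith

/-- Contraction on the half-plane `re ≤ 1 + a`. -/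
lemma mem_B_of_re_le (ha : a < -1) (hζ : ζ < 0) (hfix : Real.exp ζ + a = ζ)
    {z : ℂ} (h : z.re ≤ 1 + a) : z ∈ Bset a ζ := by
  set c : ℝ := 1 + a with hc
  have hcneg : c < 0 := by simp [hc]; linarith
  have hκ : Real.exp c < 1 := by
    rw [← Real.exp_zero]; exact Real.exp_lt_exp.mpr hcneg
  have hκ0 : (0:ℝ) ≤ Real.exp c := (Real.exp_pos c).le
  -- invariance
  have hinv : ∀ w : ℂ, w.re ≤ c → (expMap (a : ℂ) w).re ≤ c := by
    intro w hw
    have h1 := re_expMap_le (a := a) w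
    have h2 : Real.exp w.re ≤ Real.exp c := Real.exp_le_exp.mpr hw
    have h3 : Real.exp c ≤ 1 := hκ.le
    simp only [hc] at *
    linarith
  have hζc : (ζ : ℂ).re ≤ c := by
    simpa using zeta_lt ha hζ hfix
  -- induction
  have key : ∀ n : ℕ, ((expMap (a : ℂ))^[n] z).re ≤ c ∧
      ‖(expMap (a : ℂ))^[n] z - (ζ : ℂ)‖ ≤
        (Real.exp c)^n * ‖z - (ζ : ℂ)‖ := by
    intro n
    induction n with
    | zero => exact ⟨h, by simp⟩
    | succ n ih =>
      obtain ⟨hre, habs⟩ := ih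
      rw [Function.iterate_succ_apply']
      constructor
      · exact hinv _ hre
      · have h1 : expMap (a : ℂ) ((expMap (a:ℂ))^[n] z) - (ζ:ℂ) =
            Complex.exp ((expMap (a:ℂ))^[n] z) - Complex.exp (ζ:ℂ) := by
          rw [expMap_apply]
          have := fixedPoint (a := a) (ζ := ζ) hfix
          rw [expMap_apply] at this
          have : (ζ:ℂ) = Complex.exp (ζ:ℂ) + (a:ℂ) := this.symm
          nth_rewrite 1 [this]
          ring
        rw [h1]
        calc ‖Complex.exp ((expMap (a:ℂ))^[n] z) - Complex.exp (ζ:ℂ)‖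
            ≤ Real.exp c * ‖(expMap (a:ℂ))^[n] z - (ζ:ℂ)‖ := expLip hre hζc
          _ ≤ Real.exp c * ((Real.exp c)^n * ‖z - (ζ:ℂ)‖) := by
              exact mul_le_mul_of_nonneg_left habs hκ0
          _ = (Real.exp c)^(n+1) * ‖z - (ζ:ℂ)‖ := by ring
  -- tendsto
  rw [Bset, Set.mem_setOf_eq, tendsto_iff_dist_tendsto_zero]
  apply squeeze_zero (fun n => dist_nonneg)
    (g := fun n => (Real.exp c)^n * ‖z - (ζ : ℂ)‖)
  · intro n
    have := (key n).2
    simpa [Complex.dist_eq] using this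
  · simpa using (tendsto_pow_atTop_nhds_zero_of_lt_one hκ0 hκ).mul_const
      (‖z - (ζ : ℂ)‖)

lemma B_backward (hz : expMap (a : ℂ) z ∈ Bset a ζ) : z ∈ Bset a ζ := by
  rw [Bset, Set.mem_setOf_eq] at hz ⊢
  rw [← tendsto_add_atTop_iff_nat 1]
  simpa [Function.iterate_succ_apply] using hz

lemma B_backward_iter (n : ℕ) {z : ℂ} (hz : (expMap (a : ℂ))^[n] z ∈ Bset a ζ) :
    z ∈ Bset a ζ := by
  induction n generalizing z with
  | zero => simpa using hz
  | succ n ih =>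
    rw [Function.iterate_succ_apply] at hz
    exact B_backward (ih hz)

lemma I_backward_iter (n : ℕ) {z : ℂ}
    (hz : (expMap (a : ℂ))^[n] z ∈ escapingSet (a : ℂ)) : z ∈ escapingSet (a : ℂ) := by
  rw [escapingSet, Set.mem_setOf_eq] at hz ⊢
  rw [← tendsto_add_atTop_iff_nat n]
  simpa [← Function.iterate_add_apply] using hz

lemma rr_pos (ha : a < -1) : 0 < rr a := by
  rw [rr]
  have h0 : a < 0 := ha_neg ha
  have hpos : (0:ℝ) < -a := by linarith
  have h1 : 1/(-a) < 1 := by rw [div_lt_one hpos]; linarith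
  have h2 : 1/a = -(1/(-a)) := by rw [div_neg, neg_neg]
  linarith

lemma exp_rr_le (ha : a < -1) : Real.exp (rr a) ≤ -a := by
  have h0 : a < 0 := ha_neg ha
  have hpos : 0 < -a := by linarith
  have h1 : Real.log (1 / (-a)) ≤ 1/(-a) - 1 := Real.log_le_sub_one_of_pos (by positivity)
  have h2 : Real.log (1/(-a)) = - Real.log (-a) := by
    rw [one_div, Real.log_inv]
  have h3 : 1 - 1/(-a) ≤ Real.log (-a) := by linarith
  have h4 : rr a = 1 - 1/(-a) := by rw [rr, div_neg]; ring
  calc Real.exp (rr a) ≤ Real.exp (Real.log (-a)) := Real.exp_le_exp.mpr (by rw [h4]; exact h3)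
    _ = -a := Real.exp_log hpos

lemma mem_B_of_re_le_rr (ha : a < -1) (hζ : ζ < 0) (hfix : Real.exp ζ + a = ζ)
    {z : ℂ} (h : z.re ≤ rr a) : z ∈ Bset a ζ := by
  have h1 : (expMap (a : ℂ) z).re ≤ 0 := by
    have := re_expMap_le (a := a) z
    have h2 : Real.exp z.re ≤ Real.exp (rr a) := Real.exp_le_exp.mpr h
    have := exp_rr_le ha
    linarith
  have h2 : (expMap (a : ℂ) (expMap (a : ℂ) z)).re ≤ 1 + a := by
    have := re_expMap_le (a := a) (expMap (a : ℂ) z)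
    have h3 : Real.exp (expMap (a : ℂ) z).re ≤ Real.exp 0 := Real.exp_le_exp.mpr h1
    rw [Real.exp_zero] at h3
    linarith
  exact B_backward (B_backward (mem_B_of_re_le ha hζ hfix h2))

lemma mem_B_of_cos_nonpos (ha : a < -1) (hζ : ζ < 0) (hfix : Real.exp ζ + a = ζ)
    {z : ℂ} (h : Real.cos z.im ≤ 0) : z ∈ Bset a ζ := by
  apply B_backward
  apply mem_B_of_re_le_rr ha hζ hfix
  rw [re_expMap]
  have h1 : Real.exp z.re * Real.cos z.im ≤ 0 :=
    mul_nonpos_of_nonneg_of_nonpos (Real.exp_pos _).le h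
  have := rr_pos ha
  linarith

lemma K_sub_B (ha : a < -1) (hζ : ζ < 0) (hfix : Real.exp ζ + a = ζ) :
    Kset a ⊆ Bset a ζ := by
  intro z hz
  rcases hz with h | h
  · exact mem_B_of_re_le_rr ha hζ hfix h
  · exact mem_B_of_cos_nonpos ha hζ hfix h

lemma K_closed : IsClosed (Kset a) := by
  apply IsClosed.union
  · exact isClosed_le Complex.continuous_re continuous_const
  · exact isClosed_le (Real.continuous_cos.comp Complex.continuous_im) continuous_const

end NTS
end

section
variable {a ζ t₀ : ℝ}
open NTS Filter Set Metric Bornology Real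

namespace NTS

/-- Band decomposition: points outside `K` lie in a strip around `2πk`. -/
lemma band {z : ℂ} (hz : z ∉ Kset a) :
    rr a < z.re ∧ ∃ k : ℤ, |z.im - 2*π*k| < π/2 := by
  rw [Kset, Set.mem_setOf_eq, not_or, not_le, not_le] at hz
  obtain ⟨h1, h2⟩ := hz
  refine ⟨h1, ?_⟩
  set k : ℤ := round (z.im / (2*π)) with hk
  refine ⟨k, ?_⟩
  have hpi : (0:ℝ) < π := Real.pi_pos
  have h2pi : (0:ℝ) < 2*π := by linarith
  have hr : |z.im / (2*π) - k| ≤ 1/2 := abs_sub_round _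
  have hb : |z.im - 2*π*k| ≤ π := by
    have h3 : z.im - 2*π*k = 2*π * (z.im/(2*π) - k) := by field_simp
    rw [h3, abs_mul, abs_of_pos h2pi]
    nlinarith [hr]
  by_contra hcon
  push_neg at hcon
  -- then cos z.im ≤ 0, contradiction
  have hcos : Real.cos z.im ≤ 0 := by
    have heq : Real.cos z.im = Real.cos (z.im - 2*π*k) := by
      rw [show z.im - 2*π*k = z.im - k * (2*π) by ring, Real.cos_sub_int_mul_two_pi]
    rw [heq]
    set u := z.im - 2*π*k with hu
    rcases le_or_gt 0 u with h | h
    · apply Real.cos_nonpos_of_pi_div_two_le_of_le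
      · rw [abs_of_nonneg h] at hcon; exact hcon
      · rw [abs_of_nonneg h] at hb; linarith
    · rw [← Real.cos_neg]
      apply Real.cos_nonpos_of_pi_div_two_le_of_le
      · rw [abs_of_neg h] at hcon; exact hcon
      · rw [abs_of_neg h] at hb; linarith
  linarith

/-- Margin: quantization of imaginary parts in bands. -/
lemma margin {y : ℝ} {k : ℤ} {N : ℕ} (him : |y - 2*π*k| < π/2)
    (hy : |y| ≤ 2*π*N + π) : |y| ≤ 2*π*N + π/2 := by
  have hpi : (0:ℝ) < π := Real.pi_pos
  have hk : |(k:ℝ)| * (2*π) ≤ 2*π*N + 3*π/2 := by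
    have h1 : |2*π*(k:ℝ)| - |y| ≤ |y - 2*π*k| := by
      have := abs_sub_abs_le_abs_sub (2*π*(k:ℝ)) y
      rw [abs_sub_comm] at this
      linarith [this]
    have h2 : |2*π*(k:ℝ)| = |(k:ℝ)| * (2*π) := by
      rw [abs_mul, abs_of_pos (by linarith : (0:ℝ) < 2*π)]; ring
    linarith
  have hkN : |(k:ℝ)| ≤ N := by
    have h1 : |(k:ℝ)| < N + 1 := by
      nlinarith
    have h2 : |k| < (N:ℤ) + 1 := by exact_mod_cast (by push_cast; exact h1 : (|k|:ℝ) < ((N:ℤ):ℝ) + 1)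
    have h3 : |k| ≤ (N:ℤ) := by omega
    exact_mod_cast h3
  have h5 : |y| - |2*π*(k:ℝ)| ≤ |y - 2*π*k| := abs_sub_abs_le_abs_sub _ _
  have h6 : |2*π*(k:ℝ)| = |(k:ℝ)| * (2*π) := by
    rw [abs_mul, abs_of_pos (by linarith : (0:ℝ) < 2*π)]; ring
  have h7 : |y| ≤ |(k:ℝ)| * (2*π) + π/2 := by linarith
  nlinarith

noncomputable def tf (a t₀ : ℝ) : ℕ → ℝ := fun j => (P a)^[j] t₀

noncomputable def Nf (a t₀ : ℝ) (j : ℕ) : ℕ := ⌈(tf a t₀ j + 2*π)/(2*π)⌉₊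

noncomputable def cf (a t₀ : ℝ) (j : ℕ) : ℝ := 2*π*(Nf a t₀ j) + π

def Aster (a t₀ : ℝ) : Set ℂ :=
  {z | ∀ j, tf a t₀ j - 3 ≤ ‖(expMap (a:ℂ))^[j] z‖}

def Sn (a t₀ : ℝ) (n : ℕ) : Set ℂ :=
  {z | (∀ i < n, tf a t₀ i - 3 ≤ ‖(expMap (a:ℂ))^[i] z‖) ∧
    (expMap (a:ℂ))^[n] z ∈ Kset a}

def Lam (a t₀ : ℝ) : Set ℂ := Aster a t₀ ∪ ⋃ n, Sn a t₀ n

lemma tf_succ (j : ℕ) : tf a t₀ (j+1) = Real.exp (tf a t₀ j) + (-a) := by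
  rw [tf, Function.iterate_succ_apply']; rfl

lemma tf_ge (ha : a < -1) (ht : 1 ≤ t₀) (j : ℕ) : t₀ + j ≤ tf a t₀ j := le_P_iter ha j t₀

lemma tf_pos (ha : a < -1) (ht : 1 ≤ t₀) (j : ℕ) : 0 < tf a t₀ j := by
  have := tf_ge ha ht j; have : (0:ℝ) ≤ j := Nat.cast_nonneg j
  have := tf_ge ha ht j
  linarith

lemma tf_mono_t (ha : a < -1) {s s' : ℝ} (h : s ≤ s') (j : ℕ) :
    tf a s j ≤ tf a s' j := P_iter_mono ha j h

lemma cf_bounds (ha : a < -1) (ht : 1 ≤ t₀) (j : ℕ) :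
    tf a t₀ j + 3*π ≤ cf a t₀ j ∧ cf a t₀ j ≤ tf a t₀ j + 5*π := by
  have hpi : (0:ℝ) < π := Real.pi_pos
  have hx : (0:ℝ) ≤ (tf a t₀ j + 2*π)/(2*π) := by
    have := tf_pos ha ht j; positivity
  have h1 : (tf a t₀ j + 2*π)/(2*π) ≤ Nf a t₀ j := Nat.le_ceil _
  have h2 : (Nf a t₀ j : ℝ) < (tf a t₀ j + 2*π)/(2*π) + 1 := Nat.ceil_lt_add_one hx
  constructor
  · have := mul_le_mul_of_nonneg_left h1 (by linarith : (0:ℝ) ≤ 2*π)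
    rw [mul_div_cancel₀] at this
    · rw [cf]; linarith
    · positivity
  · have := mul_le_mul_of_nonneg_left h2.le (by linarith : (0:ℝ) ≤ 2*π)
    rw [mul_add, mul_div_cancel₀] at this
    · rw [cf]; linarith
    · positivity

lemma tf_le_cf (ha : a < -1) (ht : 1 ≤ t₀) (j : ℕ) : tf a t₀ j ≤ cf a t₀ j := by
  have := (cf_bounds ha ht j).1; have := Real.pi_pos; linarith

lemma cf_pos (ha : a < -1) (ht : 1 ≤ t₀) (j : ℕ) : 0 < cf a t₀ j := by
  have := tf_pos ha ht j; have := tf_le_cf ha ht j; linarith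

lemma Sn_closed (n : ℕ) : IsClosed (Sn a t₀ n) := by
  have heq : Sn a t₀ n =
      (⋂ i ∈ Set.Iio n, {z : ℂ | tf a t₀ i - 3 ≤ ‖(expMap (a:ℂ))^[i] z‖}) ∩
      (expMap (a:ℂ))^[n] ⁻¹' (Kset a) := by
    ext z; simp [Sn]
  rw [heq]
  apply IsClosed.inter
  · apply isClosed_biInter
    intro i _
    exact isClosed_le continuous_const (continuous_norm.comp (contFiter i))
  · exact K_closed.preimage (contFiter n)

lemma Y_open : IsOpen (Lam a t₀)ᶜ := by
  rw [isOpen_iff_mem_nhds]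
  intro z hz
  rw [Set.mem_compl_iff, Lam, Set.mem_union, not_or] at hz
  obtain ⟨hA, hS⟩ := hz
  rw [Aster, Set.mem_setOf_eq] at hA
  push_neg at hA
  obtain ⟨m, hm⟩ := hA
  rw [Set.mem_iUnion] at hS
  push_neg at hS
  set W : Set ℂ := {z' : ℂ | ‖(expMap (a:ℂ))^[m] z'‖ < tf a t₀ m - 3} ∩
      ⋂ n ∈ Set.Iic m, (Sn a t₀ n)ᶜ with hWdef
  have hWopen : IsOpen W := by
    apply IsOpen.inter
    · exact isOpen_lt (continuous_norm.comp (contFiter m)) continuous_const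
    · exact (Set.finite_Iic m).isOpen_biInter (fun n _ => (Sn_closed n).isOpen_compl)
  have hzW : z ∈ W := by
    constructor
    · exact hm
    · rw [Set.mem_iInter₂]
      intro n _
      exact hS n
  apply Filter.mem_of_superset (hWopen.mem_nhds hzW)
  intro z' hz'
  obtain ⟨h1, h2⟩ := hz'
  rw [Set.mem_iInter₂] at h2
  rw [Set.mem_compl_iff, Lam, Set.mem_union, not_or]
  constructor
  · intro hA'
    exact absurd (hA' m) (by rw [not_le]; exact h1)
  · rw [Set.mem_iUnion]
    push_neg
    intro n
    rcases le_or_gt n m with h | h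
    · exact h2 n h
    · intro hSn
      exact absurd (hSn.1 m h) (by rw [not_le]; exact h1)

lemma Lam_closed : IsClosed (Lam a t₀) := by
  rw [← isOpen_compl_iff]; exact Y_open

lemma Aster_sub_I (ha : a < -1) (ht : 1 ≤ t₀) :
    Aster a t₀ ⊆ escapingSet (a : ℂ) := by
  intro z hz
  rw [escapingSet, Set.mem_setOf_eq]
  have hbound : ∀ j : ℕ, t₀ + (j:ℝ) - 3 ≤ ‖(expMap (a:ℂ))^[j] z‖ := by
    intro j
    have h1 := hz j
    have h2 := tf_ge ha ht j
    linarith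
  apply tendsto_atTop_mono hbound
  apply tendsto_atTop_add_const_right
  apply tendsto_atTop_add_const_left
  exact tendsto_natCast_atTop_atTop

lemma Lam_sub (ha : a < -1) (hζ : ζ < 0) (hfix : Real.exp ζ + a = ζ) (ht : 1 ≤ t₀) :
    Lam a t₀ ⊆ Bset a ζ ∪ escapingSet (a : ℂ) := by
  intro z hz
  rcases hz with hz | hz
  · exact Or.inr (Aster_sub_I ha ht hz)
  · rw [Set.mem_iUnion] at hz
    obtain ⟨n, hn⟩ := hz
    exact Or.inl (B_backward_iter n (K_sub_B ha hζ hfix hn.2))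

end NTS
end

section
variable {a ζ t₀ : ℝ}
open NTS Filter Set Metric Bornology Real

namespace NTS

noncomputable def qq (a : ℝ) : ℝ := (rr a - a)⁻¹

lemma rr_sub_a_gt_one (ha : a < -1) : 1 < rr a - a := by
  have := rr_pos ha; rw [rr] at *; linarith [rr_pos ha]

lemma qq_pos (ha : a < -1) : 0 < qq a := by
  rw [qq]; have := rr_sub_a_gt_one ha; positivity

lemma qq_lt_one (ha : a < -1) : qq a < 1 := by
  rw [qq]
  have h := rr_sub_a_gt_one ha
  rw [inv_lt_one_iff₀]
  right; exact h

lemma logLip (ha : a < -1) {w₁ w₂ : ℂ} (h1 : rr a < w₁.re) (h2 : rr a < w₂.re) :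
    ‖Complex.log (w₁ - (a:ℂ)) - Complex.log (w₂ - (a:ℂ))‖ ≤
      qq a * ‖w₁ - w₂‖ := by
  have hgt : (0:ℝ) < rr a - a := by linarith [rr_sub_a_gt_one ha]
  have key := Convex.norm_image_sub_le_of_norm_hasDerivWithin_le
    (f := fun w : ℂ => Complex.log (w - (a:ℂ))) (f' := fun w : ℂ => (w - (a:ℂ))⁻¹)
    (s := {w : ℂ | rr a < w.re}) (C := qq a)
    (fun x hx => by
      have hmem : (x - (a:ℂ)) ∈ Complex.slitPlane := by
        rw [Complex.mem_slitPlane_iff]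
        left
        simp only [Complex.sub_re, Complex.ofReal_re]
        rw [Set.mem_setOf_eq] at hx
        linarith
      have hd := (Complex.hasDerivAt_log hmem).comp x ((hasDerivAt_id x).sub_const (a:ℂ))
      simpa [Function.comp_def] using hd.hasDerivWithinAt)
    (fun x hx => by
      rw [Set.mem_setOf_eq] at hx
      have hre : rr a - a ≤ (x - (a:ℂ)).re := by
        simp only [Complex.sub_re, Complex.ofReal_re]; linarith
      have habs : rr a - a ≤ ‖x - (a:ℂ)‖ :=
        le_trans hre (Complex.re_le_norm _)
      simp only [norm_inv, qq]
      exact inv_anti₀ hgt habs)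
    (convex_halfSpace_re_gt (rr a)) h2 h1
  simpa using key

noncomputable def strip (a : ℝ) (k : ℤ) : Set ℂ :=
  {z : ℂ | rr a < z.re ∧ |z.im - 2*π*k| < π/2}

lemma strip_open (k : ℤ) : IsOpen (strip a k) := by
  apply IsOpen.inter
  · exact isOpen_lt continuous_const Complex.continuous_re
  · exact isOpen_lt ((Complex.continuous_im.sub continuous_const).abs) continuous_const

lemma mem_strip_of_notK {z : ℂ} (hz : z ∉ Kset a) : ∃ k : ℤ, z ∈ strip a k := by
  obtain ⟨h1, k, h2⟩ := band hz
  exact ⟨k, h1, h2⟩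

lemma frontier_strip (k : ℤ) : frontier (strip a k) ⊆ Kset a := by
  intro w hw
  have hcl : closure (strip a k) ⊆ {z : ℂ | rr a ≤ z.re ∧ |z.im - 2*π*k| ≤ π/2} := by
    apply closure_minimal
    · intro z hz; exact ⟨hz.1.le, hz.2.le⟩
    · exact IsClosed.inter (isClosed_le continuous_const Complex.continuous_re)
        (isClosed_le ((Complex.continuous_im.sub continuous_const).abs) continuous_const)
  rw [frontier, (strip_open k).interior_eq] at hw
  obtain ⟨hw1, hw2⟩ := hw
  have hc := hcl hw1
  rw [Set.mem_setOf_eq] at hc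
  rw [strip, Set.mem_setOf_eq, not_and_or] at hw2
  rcases hw2 with h | h
  · left; rw [not_lt] at h; exact h
  · right
    rw [not_lt] at h
    have heq : |w.im - 2*π*k| = π/2 := le_antisymm hc.2 h
    have hcos : Real.cos w.im = Real.cos (w.im - 2*π*k) := by
      rw [show w.im - 2*π*k = w.im - k * (2*π) by ring, Real.cos_sub_int_mul_two_pi]
    rw [hcos]
    rcases (abs_eq (by positivity : (0:ℝ) ≤ π/2)).mp heq with h' | h'
    · rw [h', Real.cos_pi_div_two]
    · rw [h', Real.cos_neg, Real.cos_pi_div_two]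

lemma branch_id (k : ℤ) {z : ℂ} (hz : z ∈ strip a k) :
    Complex.log (expMap (a:ℂ) z - (a:ℂ)) = z - ((2*π*k : ℝ) : ℂ) * Complex.I := by
  rw [expMap_sub_a]
  have hexp : Complex.exp z = Complex.exp (z - ((2*π*k : ℝ):ℂ) * Complex.I) := by
    rw [Complex.exp_sub]
    have h1 : ((2*π*(k:ℝ) : ℝ):ℂ) * Complex.I = (k:ℂ) * (2 * (π:ℂ) * Complex.I) := by
      push_cast; ring
    rw [h1, Complex.exp_int_mul_two_pi_mul_I, div_one]
  rw [hexp]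
  have him : (z - ((2*π*(k:ℝ) : ℝ):ℂ) * Complex.I).im = z.im - 2*π*k := by
    simp [Complex.sub_im, Complex.mul_im, Complex.I_im, Complex.I_re]
  have hb := hz.2
  have hpi : (0:ℝ) < π := Real.pi_pos
  have habs1 : -π < (z - ((2*π*(k:ℝ) : ℝ):ℂ) * Complex.I).im := by
    rw [him]; rw [abs_lt] at hb; linarith [hb.1]
  have habs2 : (z - ((2*π*(k:ℝ) : ℝ):ℂ) * Complex.I).im ≤ π := by
    rw [him]; rw [abs_lt] at hb; linarith [hb.2]
  exact Complex.log_exp habs1 habs2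

lemma step_contract (ha : a < -1) {k : ℤ} {u v : ℂ} (hu : u ∈ strip a k) (hv : v ∈ strip a k)
    (hu' : rr a < (expMap (a:ℂ) u).re) (hv' : rr a < (expMap (a:ℂ) v).re) :
    ‖u - v‖ ≤ qq a * ‖expMap (a:ℂ) u - expMap (a:ℂ) v‖ := by
  have h1 : u - v = Complex.log (expMap (a:ℂ) u - (a:ℂ)) -
      Complex.log (expMap (a:ℂ) v - (a:ℂ)) := by
    rw [branch_id k hu, branch_id k hv]; ring
  rw [h1]
  exact logLip ha hu' hv'

lemma K_sub_Lam : Kset a ⊆ Lam a t₀ := by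
  intro z hz
  right
  rw [Set.mem_iUnion]
  exact ⟨0, fun i hi => absurd hi (Nat.not_lt_zero i), by simpa using hz⟩

lemma Y_re_gt {z : ℂ} (hz : z ∈ (Lam a t₀)ᶜ) : z ∉ Kset a :=
  fun h => hz (K_sub_Lam h)

lemma log_cf_ineq (ha : a < -1) (ht1 : 1 ≤ t₀) (ht2 : 32 - 3*a ≤ Real.exp t₀) (j : ℕ) :
    Real.log (2 * cf a t₀ (j+1) - a) ≤ tf a t₀ j + 2*π := by
  have hpi : (3:ℝ) < π := Real.pi_gt_three
  have hpi2 : π < 3.15 := Real.pi_lt_d2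
  have hcf := (cf_bounds ha ht1 (j+1)).2
  have htf1 := tf_succ (a := a) (t₀ := t₀) j
  have hexpt : 32 - 3*a ≤ Real.exp (tf a t₀ j) := by
    have h1 : t₀ ≤ tf a t₀ j := by
      have h2 := tf_ge ha ht1 j
      have h3 : (0:ℝ) ≤ (j:ℝ) := Nat.cast_nonneg j
      linarith
    exact le_trans ht2 (Real.exp_le_exp.mpr h1)
  have hepi : (4:ℝ) ≤ Real.exp π := by
    have := Real.add_one_le_exp π; linarith
  have hkey : 2 * cf a t₀ (j+1) - a ≤ Real.exp (tf a t₀ j + 2*π) := by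
    have hrhs : Real.exp (tf a t₀ j + 2*π) =
        Real.exp (tf a t₀ j) * (Real.exp π * Real.exp π) := by
      rw [← Real.exp_add, ← Real.exp_add]; ring_nf
    rw [hrhs]
    have hX := Real.exp_pos (tf a t₀ j)
    have h16 : (16:ℝ) ≤ Real.exp π * Real.exp π := by nlinarith
    have hE16 : 16 * Real.exp (tf a t₀ j) ≤
        Real.exp (tf a t₀ j) * (Real.exp π * Real.exp π) := by nlinarith
    linarith
  have hposl : (0:ℝ) < 2 * cf a t₀ (j+1) - a := by
    have := cf_pos ha ht1 (j+1); linarith [ha_neg ha]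
  rw [Real.log_le_iff_le_exp hposl]
  exact hkey

lemma unlock (ha : a < -1) {z : ℂ} {i j : ℕ} (hij : i ≤ j)
    (h : ‖(expMap (a:ℂ))^[i] z‖ ≤ tf a t₀ i) :
    ‖(expMap (a:ℂ))^[j] z‖ ≤ tf a t₀ j := by
  have h1 : (expMap (a:ℂ))^[j] z = (expMap (a:ℂ))^[j-i] ((expMap (a:ℂ))^[i] z) := by
    rw [← Function.iterate_add_apply, Nat.sub_add_cancel hij]
  rw [h1]
  calc ‖(expMap (a:ℂ))^[j-i] ((expMap (a:ℂ))^[i] z)‖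
      ≤ (P a)^[j-i] (‖(expMap (a:ℂ))^[i] z‖) := iter_growth ha _ _
    _ ≤ (P a)^[j-i] (tf a t₀ i) := P_iter_mono ha _ h
    _ = tf a t₀ j := by
        rw [tf, tf, ← Function.iterate_add_apply, Nat.sub_add_cancel hij]

end NTS
end

section
variable {a ζ t₀ : ℝ}
open NTS Filter Set Metric Bornology Real

namespace NTS

lemma notAster_of_Y {z : ℂ} (hz : z ∈ (Lam a t₀)ᶜ) :
    ∃ n, ‖(expMap (a:ℂ))^[n] z‖ < tf a t₀ n - 3 := by
  have h : z ∉ Aster a t₀ := fun h => hz (Or.inl h)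
  rw [Aster, Set.mem_setOf_eq] at h
  push_neg at h
  simpa using h

lemma exists_min_escape {z : ℂ} (hz : z ∈ (Lam a t₀)ᶜ) :
    ∃ m, ‖(expMap (a:ℂ))^[m] z‖ < tf a t₀ m - 3 ∧
      ∀ i < m, tf a t₀ i - 3 ≤ ‖(expMap (a:ℂ))^[i] z‖ := by
  classical
  have hex := notAster_of_Y hz
  exact ⟨Nat.find hex, Nat.find_spec hex, fun i hi => not_lt.mp (Nat.find_min hex hi)⟩

lemma notSn_of_Y {z : ℂ} (hz : z ∈ (Lam a t₀)ᶜ) (n : ℕ)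
    (hpre : ∀ i < n, tf a t₀ i - 3 ≤ ‖(expMap (a:ℂ))^[i] z‖) :
    (expMap (a:ℂ))^[n] z ∉ Kset a := by
  intro hK
  exact hz (Or.inr (Set.mem_iUnion.mpr ⟨n, hpre, hK⟩))

set_option maxHeartbeats 1600000 in
lemma component_bound (ha : a < -1) (ht1 : 1 ≤ t₀) (ht2 : 32 - 3*a ≤ Real.exp t₀)
    {y₀ : ℂ} (hy₀ : y₀ ∈ (Lam a t₀)ᶜ) (hy₀b : ‖y₀‖ ≤ t₀) :
    connectedComponentIn (Lam a t₀)ᶜ y₀ ⊆ Metric.closedBall 0 (2 * cf a t₀ 0) := by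
  classical
  set Y := (Lam a t₀)ᶜ with hYdef
  set Q := connectedComponentIn Y y₀ with hQdef
  have hQsub : Q ⊆ Y := connectedComponentIn_subset Y y₀
  have hQpre : IsPreconnected Q := (isConnected_connectedComponentIn_iff.mpr hy₀).isPreconnected
  haveI : PreconnectedSpace Q := Subtype.preconnectedSpace hQpre
  set C : Set ℂ := {z : ℂ | ∀ j, |((expMap (a:ℂ))^[j] z).im| ≤ cf a t₀ j} with hCdef
  -- every point of Y ∩ C has an open neighborhood inside C
  have hWs : ∀ z, z ∈ Y → z ∈ C → ∃ Wz : Set ℂ, IsOpen Wz ∧ z ∈ Wz ∧ Wz ⊆ C := by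
    intro z hzY hzC
    obtain ⟨m, hms, hmin⟩ := exists_min_escape hzY
    refine ⟨{z' : ℂ | ‖(expMap (a:ℂ))^[m] z'‖ < tf a t₀ m - 3} ∩
      ⋂ j ∈ Set.Iic m, {z' : ℂ | |((expMap (a:ℂ))^[j] z').im| < cf a t₀ j}, ?_, ?_, ?_⟩
    · apply IsOpen.inter
      · exact isOpen_lt (continuous_norm.comp (contFiter m)) continuous_const
      · exact (Set.finite_Iic m).isOpen_biInter (fun j _ =>
          isOpen_lt ((Complex.continuous_im.comp (contFiter j)).abs) continuous_const)
    · constructor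
      · exact hms
      · rw [Set.mem_iInter₂]
        intro j hj
        have hpre : ∀ i < j, tf a t₀ i - 3 ≤ ‖(expMap (a:ℂ))^[i] z‖ :=
          fun i hi => hmin i (lt_of_lt_of_le hi hj)
        have hnotK := notSn_of_Y hzY j hpre
        obtain ⟨k, hk⟩ := mem_strip_of_notK hnotK
        have hbound : |((expMap (a:ℂ))^[j] z).im| ≤ 2*π*(Nf a t₀ j) + π := by
          have h5 := hzC j; rw [cf] at h5; exact h5
        have hmarg := margin hk.2 hbound
        rw [Set.mem_setOf_eq, cf]
        have hpi := Real.pi_pos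
        linarith
    · rintro z' ⟨h1, h2⟩
      rw [Set.mem_iInter₂] at h2
      rw [hCdef, Set.mem_setOf_eq]
      intro j
      rcases le_or_gt j m with hj | hj
      · exact (h2 j hj).le
      · have habs : ‖(expMap (a:ℂ))^[j] z'‖ ≤ tf a t₀ j := by
          apply unlock ha hj.le
          rw [Set.mem_setOf_eq] at h1
          linarith
        exact le_trans (le_trans (Complex.abs_im_le_norm _) habs) (tf_le_cf ha ht1 j)
  choose! Wf hWopen hWmem hWsub using hWs
  have hQC : ∀ z ∈ Q, z ∈ C := by
    set O : Set ℂ := ⋃ z ∈ {w : ℂ | w ∈ Y ∧ w ∈ C}, Wf z with hOdef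
    have hOopen : IsOpen O := isOpen_biUnion (fun z hz => hWopen z hz.1 hz.2)
    have hOsubC : O ⊆ C := by
      intro w hw
      rw [hOdef, Set.mem_iUnion₂] at hw
      obtain ⟨z, hz, hwz⟩ := hw
      exact hWsub z hz.1 hz.2 hwz
    set T : Set Q := Subtype.val ⁻¹' C with hTdef
    have hTeq : T = Subtype.val ⁻¹' O := by
      apply Set.ext
      rintro ⟨x, hxQ⟩
      simp only [hTdef, Set.mem_preimage]
      constructor
      · intro hxC
        have hxY : x ∈ Y := hQsub hxQ
        rw [hOdef]
        rw [Set.mem_iUnion₂]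
        exact ⟨x, ⟨hxY, hxC⟩, hWmem x hxY hxC⟩
      · intro hxO
        exact hOsubC hxO
    have hTclosed : IsClosed T := by
      apply IsClosed.preimage continuous_subtype_val
      have hCeq : C = ⋂ j, {z : ℂ | |((expMap (a:ℂ))^[j] z).im| ≤ cf a t₀ j} := by
        ext z; simp [hCdef]
      rw [hCeq]
      exact isClosed_iInter (fun j => isClosed_le
        ((Complex.continuous_im.comp (contFiter j)).abs) continuous_const)
    have hTopen : IsOpen T := by
      rw [hTeq]
      exact hOopen.preimage continuous_subtype_val
    have hy₀Q : y₀ ∈ Q := mem_connectedComponentIn hy₀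
    have hy₀C : y₀ ∈ C := by
      rw [hCdef, Set.mem_setOf_eq]
      intro j
      have h1 := iter_growth ha j y₀
      have h2 := P_iter_mono ha j hy₀b
      have h3 := Complex.abs_im_le_norm ((expMap (a:ℂ))^[j] y₀)
      have h4 := tf_le_cf ha ht1 j
      have h5 : (P a)^[j] t₀ = tf a t₀ j := rfl
      linarith
    have hTuniv : T = Set.univ := IsClopen.eq_univ ⟨hTclosed, hTopen⟩
      ⟨⟨y₀, hy₀Q⟩, Set.mem_preimage.mpr hy₀C⟩
    intro z hzQ
    have hmem : (⟨z, hzQ⟩ : Q) ∈ T := hTuniv ▸ Set.mem_univ _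
    rw [hTdef, Set.mem_preimage] at hmem
    exact hmem
  -- final bound
  intro z hzQ
  have hzY : z ∈ Y := hQsub hzQ
  have hzC : z ∈ C := hQC z hzQ
  rw [hCdef, Set.mem_setOf_eq] at hzC
  obtain ⟨m, hms, hmin⟩ := exists_min_escape hzY
  have main : ∀ d j, j + d = m → ‖(expMap (a:ℂ))^[j] z‖ ≤ 2 * cf a t₀ j := by
    intro d
    induction d with
    | zero =>
      intro j hj
      rw [Nat.add_zero] at hj
      subst hj
      have h2 := tf_le_cf ha ht1 j
      have h3 := cf_pos ha ht1 j
      have h1 : ‖(expMap (a:ℂ))^[j] z‖ < tf a t₀ j - 3 := hms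
      linarith
    | succ d ih =>
      intro j hj
      have hjm : j < m := by omega
      have hIH := ih (j+1) (by omega)
      have hpre : ∀ i < j, tf a t₀ i - 3 ≤ ‖(expMap (a:ℂ))^[i] z‖ :=
        fun i hi => hmin i (lt_trans hi hjm)
      have hnotK := notSn_of_Y hzY j hpre
      obtain ⟨k, hk⟩ := mem_strip_of_notK hnotK
      set u := (expMap (a:ℂ))^[j] z with hudef
      have hsucc : (expMap (a:ℂ))^[j+1] z = expMap (a:ℂ) u := by
        rw [hudef, Function.iterate_succ_apply']
      have habs_sub : ‖(expMap (a:ℂ))^[j+1] z - (a:ℂ)‖ = Real.exp u.re := by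
        rw [hsucc, abs_expMap_sub_a]
      have hub : ‖(expMap (a:ℂ))^[j+1] z - (a:ℂ)‖ ≤ 2 * cf a t₀ (j+1) - a := by
        have htri : ‖(expMap (a:ℂ))^[j+1] z - (a:ℂ)‖ ≤
            ‖(expMap (a:ℂ))^[j+1] z‖ + ‖(a:ℂ)‖ := by
          simpa [sub_eq_add_neg] using
            norm_add_le ((expMap (a:ℂ))^[j+1] z) (-(a:ℂ))
        have habsa : ‖(a:ℂ)‖ = -a := by
          rw [Complex.norm_real, Real.norm_eq_abs, abs_of_neg (ha_neg ha)]
        linarith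
      have hre_le : u.re ≤ tf a t₀ j + 2*π := by
        have hre : u.re = Real.log (‖(expMap (a:ℂ))^[j+1] z - (a:ℂ)‖) := by
          rw [habs_sub, Real.log_exp]
        have hpos : (0:ℝ) < ‖(expMap (a:ℂ))^[j+1] z - (a:ℂ)‖ := by
          rw [habs_sub]; exact Real.exp_pos _
        rw [hre]
        calc Real.log (‖(expMap (a:ℂ))^[j+1] z - (a:ℂ)‖)
            ≤ Real.log (2 * cf a t₀ (j+1) - a) := Real.log_le_log hpos hub
          _ ≤ tf a t₀ j + 2*π := log_cf_ineq ha ht1 ht2 j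
      have him : |u.im| ≤ cf a t₀ j := hzC j
      have hre_pos : 0 < u.re := lt_trans (rr_pos ha) hk.1
      have habs_le : ‖u‖ ≤ |u.re| + |u.im| := Complex.norm_le_abs_re_add_abs_im u
      have hcb := (cf_bounds ha ht1 j).1
      have hpi := Real.pi_gt_three
      rw [abs_of_pos hre_pos] at habs_le
      linarith
  have hfin := main m 0 (by omega)
  simp only [Function.iterate_zero_apply] at hfin
  rw [Metric.mem_closedBall, dist_eq_norm, sub_zero]
  exact hfin

end NTS
end

section
variable {a ζ t₀ : ℝ}
open NTS Filter Set Metric Bornology Real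

namespace NTS

lemma E_iter (hζ : ζ < 0) (n : ℕ) {z : ℂ}
    (hz : z ∈ (Bset a ζ)ᶜ \ escapingSet (a:ℂ)) :
    (expMap (a:ℂ))^[n] z ∈ (Bset a ζ)ᶜ \ escapingSet (a:ℂ) :=
  ⟨fun hB => hz.1 (B_backward_iter n hB), fun hI => hz.2 (I_backward_iter n hI)⟩

lemma frontier_cci_sub {y₀ : ℂ} :
    frontier (connectedComponentIn (Lam a t₀)ᶜ y₀) ⊆ Lam a t₀ := by
  intro x hx
  by_contra hxL
  have hxY : x ∈ (Lam a t₀)ᶜ := hxL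
  have hQopen : IsOpen (connectedComponentIn (Lam a t₀)ᶜ y₀) :=
    IsOpen.connectedComponentIn Y_open
  rw [frontier, hQopen.interior_eq] at hx
  obtain ⟨hxcl, hxQ⟩ := hx
  have h1 : IsOpen (connectedComponentIn (Lam a t₀)ᶜ x) := IsOpen.connectedComponentIn Y_open
  have hxm : x ∈ connectedComponentIn (Lam a t₀)ᶜ x := mem_connectedComponentIn hxY
  obtain ⟨w, hw1, hw2⟩ := mem_closure_iff.mp hxcl _ h1 hxm
  have he1 := connectedComponentIn_eq hw1
  have he2 := connectedComponentIn_eq hw2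
  exact hxQ (by rw [he2, ← he1]; exact hxm)

lemma frontier_preimage_subset {f : ℂ → ℂ} (hf : Continuous f) (s : Set ℂ) :
    frontier (f ⁻¹' s) ⊆ f ⁻¹' (frontier s) := by
  intro x hx
  refine ⟨(Continuous.closure_preimage_subset hf s) hx.1, ?_⟩
  intro hint
  exact hx.2 (preimage_interior_subset_interior_preimage hf hint)

lemma frontier_biInter_finset {ι : Type*} [DecidableEq ι] (s : Finset ι) (U : ι → Set ℂ) :
    frontier (⋂ i ∈ s, U i) ⊆ ⋃ i ∈ s, frontier (U i) := by
  induction s using Finset.induction with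
  | empty => simp [frontier_univ]
  | @insert b s hb ih =>
    rw [Finset.set_biInter_insert, Finset.set_biUnion_insert]
    intro x hx
    rcases frontier_inter_subset _ _ hx with h | h
    · exact Or.inl h.1
    · exact Or.inr (ih h.2)

/-- The key geometric lemma: arbitrarily small open sets around non-escaping Julia
points with frontier in the basin union the escaping set. -/
lemma key (ha : a < -1) (hζ : ζ < 0) (hfix : Real.exp ζ + a = ζ) {z₀ : ℂ}
    (hz₀ : z₀ ∈ (Bset a ζ)ᶜ \ escapingSet (a:ℂ)) {ε : ℝ} (hε : 0 < ε) :
    ∃ D : Set ℂ, IsOpen D ∧ z₀ ∈ D ∧ D ⊆ Metric.closedBall z₀ ε ∧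
      frontier D ⊆ Bset a ζ ∪ escapingSet (a:ℂ) := by
  classical
  -- non-escaping gives returns
  have hne := hz₀.2
  rw [escapingSet, Set.mem_setOf_eq, tendsto_atTop_atTop] at hne
  push_neg at hne
  obtain ⟨R, hR⟩ := hne
  -- choose t₀
  set t₀ : ℝ := max (max 1 R) (Real.log (32 - 3*a)) with ht₀def
  have ht1 : 1 ≤ t₀ := le_trans (le_max_left 1 R) (le_max_left _ _)
  have ht2 : 32 - 3*a ≤ Real.exp t₀ := by
    have h1 : (0:ℝ) < 32 - 3*a := by nlinarith
    have h2 : Real.log (32 - 3*a) ≤ t₀ := le_max_right _ _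
    calc 32 - 3*a = Real.exp (Real.log (32 - 3*a)) := (Real.exp_log h1).symm
      _ ≤ Real.exp t₀ := Real.exp_le_exp.mpr h2
  have hRt : R ≤ t₀ := le_trans (le_max_right 1 R) (le_max_left _ _)
  -- contraction constant
  have hq0 : 0 < qq a := qq_pos ha
  have hq1 : qq a < 1 := qq_lt_one ha
  have hcf0 : 0 < cf a t₀ 0 := cf_pos ha ht1 0
  -- choose N with q^N * (4 cf0 + 1) < ε
  have htend : Tendsto (fun n : ℕ => (qq a)^n * (4 * cf a t₀ 0 + 1)) atTop (nhds 0) := by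
    simpa using (tendsto_pow_atTop_nhds_zero_of_lt_one hq0.le hq1).mul_const (4 * cf a t₀ 0 + 1)
  obtain ⟨N, hN⟩ := (htend.eventually (eventually_lt_nhds hε)).exists
  -- a return time
  obtain ⟨n, hnN, hret⟩ := hR N
  set y₀ : ℂ := (expMap (a:ℂ))^[n] z₀ with hy₀def
  have hy₀E : y₀ ∈ (Bset a ζ)ᶜ \ escapingSet (a:ℂ) := E_iter hζ n hz₀
  have hy₀Y : y₀ ∈ (Lam a t₀)ᶜ := by
    intro hL
    rcases Lam_sub ha hζ hfix ht1 hL with h | h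
    · exact hy₀E.1 h
    · exact hy₀E.2 h
  have hy₀b : ‖y₀‖ ≤ t₀ := le_trans hret.le hRt
  -- itinerary strips
  have hstrip : ∀ j : ℕ, ∃ k : ℤ, (expMap (a:ℂ))^[j] z₀ ∈ strip a k := by
    intro j
    apply mem_strip_of_notK
    intro hK
    exact (E_iter hζ j hz₀).1 (K_sub_B ha hζ hfix hK)
  choose ks hks using hstrip
  -- the component
  set Q : Set ℂ := connectedComponentIn (Lam a t₀)ᶜ y₀ with hQdef
  have hQb : Q ⊆ Metric.closedBall 0 (2 * cf a t₀ 0) := component_bound ha ht1 ht2 hy₀Y hy₀b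
  have hQsubY : Q ⊆ (Lam a t₀)ᶜ := connectedComponentIn_subset _ _
  have hQopen : IsOpen Q := IsOpen.connectedComponentIn Y_open
  -- the pullback domain
  set D : Set ℂ := (⋂ j ∈ Finset.range n, ((expMap (a:ℂ))^[j]) ⁻¹' (strip a (ks j))) ∩
      ((expMap (a:ℂ))^[n]) ⁻¹' Q with hDdef
  have hDopen : IsOpen D := by
    apply IsOpen.inter
    · exact isOpen_biInter_finset (fun j _ => (strip_open (ks j)).preimage (contFiter j))
    · exact hQopen.preimage (contFiter n)
  have hz₀D : z₀ ∈ D := by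
    constructor
    · rw [Set.mem_iInter₂]
      intro j _
      exact hks j
    · exact mem_connectedComponentIn hy₀Y
  -- frontier
  have hfront : frontier D ⊆ Bset a ζ ∪ escapingSet (a:ℂ) := by
    intro x hx
    rcases frontier_inter_subset _ _ hx with h | h
    · have h1 := frontier_biInter_finset (Finset.range n) _ h.1
      rw [Set.mem_iUnion₂] at h1
      obtain ⟨j, _, hj⟩ := h1
      have h2 := frontier_preimage_subset (contFiter j) (strip a (ks j)) hj
      have h3 : ((expMap (a:ℂ))^[j] x) ∈ Kset a := frontier_strip (ks j) h2
      exact Or.inl (B_backward_iter j (K_sub_B ha hζ hfix h3))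
    · have h2 := frontier_preimage_subset (contFiter n) Q h.2
      have h3 : ((expMap (a:ℂ))^[n] x) ∈ Lam a t₀ := frontier_cci_sub h2
      rcases Lam_sub ha hζ hfix ht1 h3 with h4 | h4
      · exact Or.inl (B_backward_iter n h4)
      · exact Or.inr (I_backward_iter n h4)
  -- smallness
  have hre_all : ∀ w, w ∈ D → ∀ i, i ≤ n → rr a < ((expMap (a:ℂ))^[i] w).re := by
    intro w hw i hi
    rcases lt_or_eq_of_le hi with hlt | heq
    · have := (Set.mem_iInter₂.mp hw.1) i (Finset.mem_range.mpr hlt)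
      exact this.1
    · subst heq
      have hwQ : (expMap (a:ℂ))^[i] w ∈ Q := hw.2
      have hnotK : (expMap (a:ℂ))^[i] w ∉ Kset a := Y_re_gt (hQsubY hwQ)
      exact (band hnotK).1
  have claim : ∀ d j, j + d = n → ∀ z' ∈ D,
      ‖(expMap (a:ℂ))^[j] z' - (expMap (a:ℂ))^[j] z₀‖ ≤
        (qq a)^d * (4 * cf a t₀ 0) := by
    intro d
    induction d with
    | zero =>
      intro j hj z' hz'
      rw [Nat.add_zero] at hj
      subst hj
      have h1 : (expMap (a:ℂ))^[j] z' ∈ Q := hz'.2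
      have h2 : (expMap (a:ℂ))^[j] z₀ ∈ Q := hz₀D.2
      have h3 := hQb h1
      have h4 := hQb h2
      rw [Metric.mem_closedBall, dist_eq_norm, sub_zero] at h3 h4
      have htri : ‖(expMap (a:ℂ))^[j] z' - (expMap (a:ℂ))^[j] z₀‖ ≤
          ‖(expMap (a:ℂ))^[j] z'‖ + ‖(expMap (a:ℂ))^[j] z₀‖ := by
        simpa [sub_eq_add_neg] using
          norm_add_le ((expMap (a:ℂ))^[j] z') (-((expMap (a:ℂ))^[j] z₀))
      rw [pow_zero, one_mul]
      linarith
    | succ d ih =>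
      intro j hj z' hz'
      have hjn : j < n := by omega
      have hIH := ih (j+1) (by omega) z' hz'
      have hs' : (expMap (a:ℂ))^[j] z' ∈ strip a (ks j) :=
        (Set.mem_iInter₂.mp hz'.1) j (Finset.mem_range.mpr hjn)
      have hs₀ : (expMap (a:ℂ))^[j] z₀ ∈ strip a (ks j) := hks j
      have hr' : rr a < (expMap (a:ℂ) ((expMap (a:ℂ))^[j] z')).re := by
        have h5 := hre_all z' hz' (j+1) (by omega)
        rwa [Function.iterate_succ_apply'] at h5
      have hr₀ : rr a < (expMap (a:ℂ) ((expMap (a:ℂ))^[j] z₀)).re := by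
        have h5 := hre_all z₀ hz₀D (j+1) (by omega)
        rwa [Function.iterate_succ_apply'] at h5
      have hstep := step_contract ha hs' hs₀ hr' hr₀
      rw [Function.iterate_succ_apply', Function.iterate_succ_apply'] at hIH
      calc ‖(expMap (a:ℂ))^[j] z' - (expMap (a:ℂ))^[j] z₀‖
          ≤ qq a * ‖expMap (a:ℂ) ((expMap (a:ℂ))^[j] z') -
              expMap (a:ℂ) ((expMap (a:ℂ))^[j] z₀)‖ := hstep
        _ ≤ qq a * ((qq a)^d * (4 * cf a t₀ 0)) := mul_le_mul_of_nonneg_left hIH hq0.le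
        _ = (qq a)^(d+1) * (4 * cf a t₀ 0) := by ring
  refine ⟨D, hDopen, hz₀D, ?_, hfront⟩
  intro z' hz'
  have h1 := claim n 0 (by omega) z' hz'
  simp only [Function.iterate_zero_apply] at h1
  have h2 : (qq a)^n ≤ (qq a)^N := pow_le_pow_of_le_one hq0.le hq1.le hnN
  have h3 : (qq a)^n * (4 * cf a t₀ 0) ≤ (qq a)^N * (4 * cf a t₀ 0) :=
    mul_le_mul_of_nonneg_right h2 (by linarith)
  have h4 : (qq a)^N * (4 * cf a t₀ 0) ≤ (qq a)^N * (4 * cf a t₀ 0 + 1) :=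
    mul_le_mul_of_nonneg_left (by linarith) (pow_nonneg hq0.le N)
  rw [Metric.mem_closedBall, Complex.dist_eq]
  linarith

end NTS
end

section
variable {a ζ : ℝ}
open NTS Filter Set Metric Bornology Real

namespace NTS

def Sspace (a ζ : ℝ) : Set (OnePoint ℂ) :=
  ((fun z : ℂ => (z : OnePoint ℂ)) '' ((Bset a ζ)ᶜ \ escapingSet (a:ℂ))) ∪ {OnePoint.infty}

lemma build_clopen (ha : a < -1) (hζ : ζ < 0) (hfix : Real.exp ζ + a = ζ) {w : ℂ}
    (hwE : w ∈ (Bset a ζ)ᶜ \ escapingSet (a:ℂ)) {ε : ℝ} (hε : 0 < ε) :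
    ∃ U : Set ↥(Sspace a ζ), IsClopen U ∧
      (∀ x : ↥(Sspace a ζ), (x : OnePoint ℂ) = (w : OnePoint ℂ) → x ∈ U) ∧
      (∀ x : ↥(Sspace a ζ), (x : OnePoint ℂ) = OnePoint.infty → x ∉ U) ∧
      (∀ v : ℂ, ε < dist v w → ∀ x : ↥(Sspace a ζ),
        (x : OnePoint ℂ) = (v : OnePoint ℂ) → x ∉ U) := by
  obtain ⟨D, hDopen, hwD, hDball, hfront⟩ := key ha hζ hfix hwE hε
  set U : Set ↥(Sspace a ζ) :=
    Subtype.val ⁻¹' ((fun z : ℂ => (z : OnePoint ℂ)) '' D) with hUdef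
  have hDb : IsBounded D := Metric.isBounded_closedBall.subset hDball
  have hcomp : IsCompact (closure D) :=
    Metric.isCompact_of_isClosed_isBounded isClosed_closure hDb.closure
  have hinj : Function.Injective (fun z : ℂ => (z : OnePoint ℂ)) := OnePoint.coe_injective
  have hUopen : IsOpen U :=
    (OnePoint.isOpenEmbedding_coe.isOpenMap _ hDopen).preimage continuous_subtype_val
  have hUclosed : IsClosed U := by
    have hkey : U = Subtype.val ⁻¹' ((fun z : ℂ => (z : OnePoint ℂ)) '' closure D) := by
      apply Set.ext
      rintro ⟨x, hxS⟩
      simp only [hUdef, Set.mem_preimage]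
      constructor
      · intro hx
        exact Set.image_mono subset_closure hx
      · rintro ⟨v, hv, hvx⟩
        rcases hxS with hxE | hxinf
        · obtain ⟨u, huE, hux⟩ := hxE
          have huv : v = u := hinj (hvx.trans hux.symm)
          subst huv
          refine ⟨v, ?_, hvx⟩
          by_contra hvD
          have hvf : v ∈ frontier D := by
            rw [hDopen.frontier_eq]
            exact ⟨hv, hvD⟩
          rcases hfront hvf with h | h
          · exact huE.1 h
          · exact huE.2 h
        · exfalso
          rw [Set.mem_singleton_iff] at hxinf
          exact OnePoint.infty_ne_coe v (hxinf ▸ hvx).symm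
    rw [hkey]
    exact ((hcomp.image OnePoint.continuous_coe).isClosed).preimage continuous_subtype_val
  refine ⟨U, ⟨hUclosed, hUopen⟩, ?_, ?_, ?_⟩
  · intro x hx
    rw [hUdef, Set.mem_preimage, hx]
    exact ⟨w, hwD, rfl⟩
  · intro x hx hxU
    rw [hUdef, Set.mem_preimage, hx] at hxU
    obtain ⟨v, _, hv⟩ := hxU
    exact OnePoint.infty_ne_coe v hv.symm
  · intro v hvdist x hx hxU
    rw [hUdef, Set.mem_preimage, hx] at hxU
    obtain ⟨u, huD, hu⟩ := hxU
    obtain rfl : u = v := hinj hu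
    have hub := hDball huD
    rw [Metric.mem_closedBall] at hub
    linarith

end NTS

end

/-- **Non-escaping endpoints do not explode.** For `a < -1`, with `ζ` the attracting
real fixed point and `B` its basin of attraction (the Fatou set), the set of
non-escaping points of the Julia set together with `∞` is totally separated in the
one-point compactification of `ℂ`. -/
theorem nonescaping_totally_separated (a : ℝ) (ha : a < -1) (ζ : ℝ) (hζ : ζ < 0)
    (hfix : Real.exp ζ + a = ζ) :
    TotallySeparatedClopen
      ↥(((fun z : ℂ => (z : OnePoint ℂ)) ''
          (({z : ℂ | Tendsto (fun n => (expMap (a : ℂ))^[n] z) atTop (nhds (ζ : ℂ))})ᶜ \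
            escapingSet (a : ℂ))) ∪ {OnePoint.infty}) := by
  show TotallySeparatedClopen ↥(NTS.Sspace a ζ)
  intro x y hxy
  rcases x.2 with hx | hx
  · obtain ⟨w, hwE, hwx⟩ := hx
    rcases y.2 with hy | hy
    · obtain ⟨v, hvE, hvy⟩ := hy
      have hwv : w ≠ v := by
        intro h
        apply hxy
        apply Subtype.ext
        rw [← hwx, ← hvy, h]
      have hd : (0:ℝ) < dist v w := dist_pos.mpr (fun h => hwv h.symm)
      obtain ⟨U, hU, hin, hinf, hout⟩ := NTS.build_clopen ha hζ hfix hwE (half_pos hd)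
      exact ⟨U, hU, hin x hwx.symm, hout v (by linarith) y hvy.symm⟩
    · rw [Set.mem_singleton_iff] at hy
      obtain ⟨U, hU, hin, hinf, hout⟩ := NTS.build_clopen ha hζ hfix hwE one_pos
      exact ⟨U, hU, hin x hwx.symm, hinf y hy⟩
  · rw [Set.mem_singleton_iff] at hx
    rcases y.2 with hy | hy
    · obtain ⟨v, hvE, hvy⟩ := hy
      obtain ⟨U, hU, hin, hinf, hout⟩ := NTS.build_clopen ha hζ hfix hvE one_pos
      exact ⟨Uᶜ, hU.compl, hinf x hx, fun h => h (hin y hvy.symm)⟩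
    · rw [Set.mem_singleton_iff] at hy
      exact absurd (Subtype.ext (hx.trans hy.symm)) hxy
end

section
/- Let X be a metric space and x ∈ X. Suppose that A := X \ {x} is totally separated, and that every point of A is separated from x in X. Then X is totally separated. -/
open Filter Set Metric Bornology

/-- If `X` is a metric space, `x ∈ X`, the subspace `X \ {x}` is totally separated, and
every point of `X \ {x}` is separated from `x` in `X`, then `X` is totally separated. -/
theorem totallySeparated_of_separated_from_point {X : Type*} [MetricSpace X] (x : X)
    (hA : TotallySeparatedClopen ↥({x}ᶜ : Set X))
    (hsep : ∀ a : X, a ≠ x → ∃ U : Set X, IsClopen U ∧ a ∈ U ∧ x ∉ U) :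
    TotallySeparatedClopen X := by
  intro a b hab
  by_cases hbx : b = x
  · subst hbx; exact hsep a hab
  by_cases hax : a = x
  · obtain ⟨U, hU, hbU, hxU⟩ := hsep b hbx
    exact ⟨Uᶜ, hU.compl, hax ▸ hxU, fun h => h hbU⟩
  · obtain ⟨U, hU, haU, hbU⟩ := hA ⟨a, hax⟩ ⟨b, hbx⟩ (by simpa [Subtype.ext_iff] using hab)
    obtain ⟨V, hV, haV, hxV⟩ := hsep a hax
    obtain ⟨F, hF, hUF⟩ := isClosed_induced_iff.mp hU.1
    have hopen : IsOpen ({x}ᶜ : Set X) := isClosed_singleton.isOpen_compl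
    have himU : Subtype.val '' U = F ∩ ({x}ᶜ : Set X) := by
      rw [← hUF, Subtype.image_preimage_coe]; exact Set.inter_comm _ _
    refine ⟨(Subtype.val '' U) ∩ V, ⟨?_, ?_⟩, ⟨⟨⟨a, hax⟩, haU, rfl⟩, haV⟩,
      fun ⟨hb1, _⟩ => ?_⟩
    · -- closed
      rw [← closure_eq_iff_isClosed]
      refine subset_antisymm (fun y hy => ?_) subset_closure
      have hy1 : y ∈ closure (Subtype.val '' U) :=
        closure_mono Set.inter_subset_left hy
      have hy2 : y ∈ V := hV.1.closure_subset (closure_mono Set.inter_subset_right hy)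
      have hyF : y ∈ F := by
        have := closure_mono (himU ▸ Set.inter_subset_left : Subtype.val '' U ⊆ F) hy1
        rwa [hF.closure_eq] at this
      have hyx : y ≠ x := fun h => hxV (h ▸ hy2)
      exact ⟨himU ▸ ⟨hyF, hyx⟩, hy2⟩
    · exact ((hopen.isOpenMap_subtype_val) U hU.2).inter hV.2
    · obtain ⟨c, hc, hcb⟩ := hb1
      exact hbU (by rwa [show c = ⟨b, hbx⟩ from Subtype.ext hcb] at hc)
end

section
/- Fix K ≥ 1 and a ∈ ℂ, let F(t) = e^t − 1 with F^n its n-th iterate, and let M(r, f_a) = max_{|z| = r} |e^z + a| with M^n(R, f_a) the n-th iterate of r ↦ M(r, f_a) applied to R. Then for all R ≥ max(3, ln(1 + 2(|a| + K))) and all n ≥ 1, one has R < F^n(R − 1) + K ≤ M^n(R, f_a) ≤ F^n(R + 1) − K. -/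
open Filter Set Metric Bornology

lemma abs_expMap_le' (a : ℂ) (r : ℝ) {z : ℂ} (hz : z ∈ Metric.sphere (0:ℂ) r) :
    ‖expMap a z‖ ≤ Real.exp r + ‖a‖ := by
  have hz' : ‖z‖ = r := by simpa [Complex.dist_eq] using hz
  have h2 : z.re ≤ r := hz' ▸ Complex.re_le_norm z
  calc ‖Complex.exp z + a‖ ≤ ‖Complex.exp z‖ + ‖a‖ :=
        norm_add_le _ _
    _ ≤ Real.exp r + ‖a‖ := by
        rw [Complex.norm_exp]; gcongr ?_ + _; exact Real.exp_le_exp.mpr h2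

lemma maxMod_bounds' (a : ℂ) (r : ℝ) (hr : 0 ≤ r) :
    Real.exp r - ‖a‖ ≤ maxMod a r ∧ maxMod a r ≤ Real.exp r + ‖a‖ := by
  have hmem : (r : ℂ) ∈ Metric.sphere (0:ℂ) r := by
    simp [Complex.dist_eq, Complex.norm_real, abs_of_nonneg hr]
  have hbdd : BddAbove ((fun z => ‖expMap a z‖) '' Metric.sphere (0:ℂ) r) := by
    refine ⟨Real.exp r + ‖a‖, ?_⟩
    rintro y ⟨z, hz, rfl⟩
    exact abs_expMap_le' a r hz
  constructor
  · refine le_trans ?_ (le_csSup hbdd ⟨_, hmem, rfl⟩)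
    have h1 : ‖Complex.exp (r:ℂ)‖ ≤ ‖Complex.exp (r:ℂ) + a‖ + ‖a‖ := by
      simpa using norm_add_le (Complex.exp (r:ℂ) + a) (-a)
    have h2 : ‖Complex.exp (r:ℂ)‖ = Real.exp r := by
      rw [Complex.norm_exp, Complex.ofReal_re]
    simp only [expMap]
    linarith
  · exact csSup_le ⟨_, ⟨_, hmem, rfl⟩⟩ (by rintro y ⟨z, hz, rfl⟩; exact abs_expMap_le' a r hz)

lemma Fgrowth_step_low' (K ca R t : ℝ) (hK : 1 ≤ K) (hca : 0 ≤ ca)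
    (hRe : 1 + 2 * (ca + K) ≤ Real.exp R) (ht : R - 1 ≤ t) :
    Fgrowth t + K ≤ Real.exp (t + K) - ca := by
  have e1 := Real.exp_one_gt_d9
  have hexp : Real.exp (t + K) = Real.exp t * Real.exp K := Real.exp_add t K
  have h3 : Real.exp 1 * K ≤ Real.exp K := by
    have h := Real.add_one_le_exp (K - 1)
    have : Real.exp K = Real.exp (K-1) * Real.exp 1 := by
      rw [← Real.exp_add]; ring_nf
    nlinarith [Real.exp_pos 1]
  have h1 : Real.exp (R - 1) ≤ Real.exp t := Real.exp_le_exp.mpr ht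
  have h4 : Real.exp R = Real.exp (R - 1) * Real.exp 1 := by
    rw [← Real.exp_add]; ring_nf
  have hpos := Real.exp_pos (R - 1)
  have hpos2 := Real.exp_pos t
  simp only [Fgrowth]
  nlinarith [mul_le_mul_of_nonneg_left h3 (le_of_lt hpos2),
    mul_le_mul_of_nonneg_right h1 (by nlinarith : (0:ℝ) ≤ Real.exp 1 * K - 1)]

lemma Fgrowth_step_up' (K ca R u : ℝ) (hK : 1 ≤ K) (hca : 0 ≤ ca)
    (hRe : 1 + 2 * (ca + K) ≤ Real.exp R) (hu : R + 1 ≤ u) :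
    Real.exp (u - K) + ca ≤ Fgrowth u - K := by
  have e1 := Real.exp_one_gt_d9
  have h1 : Real.exp (R + 1) ≤ Real.exp u := Real.exp_le_exp.mpr hu
  have h4 : Real.exp (R + 1) = Real.exp R * Real.exp 1 := Real.exp_add R 1
  have h5 : Real.exp (u - K) * Real.exp K = Real.exp u := by rw [← Real.exp_add]; ring_nf
  have h6 : Real.exp 1 ≤ Real.exp K := Real.exp_le_exp.mpr hK
  have hpos := Real.exp_pos (u - K)
  have hposR := Real.exp_pos R
  simp only [Fgrowth]
  nlinarith [mul_le_mul_of_nonneg_left h6 (le_of_lt hpos)]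

lemma Fgrowth_self_le' {t : ℝ} : t ≤ Fgrowth t := by
  simp only [Fgrowth]; linarith [Real.add_one_le_exp t]

lemma Fgrowth_iter_ge' (n : ℕ) (t : ℝ) : t ≤ Fgrowth^[n] t := by
  induction n with
  | zero => simp
  | succ m ih =>
    rw [Function.iterate_succ_apply']
    exact le_trans ih Fgrowth_self_le'

/-- **Iterated exponential growth, maximum modulus estimate.** For `K ≥ 1`, `a ∈ ℂ`,
`R ≥ max(3, ln(1 + 2(|a| + K)))` and `n ≥ 1`, one has
`R < F^n(R - 1) + K ≤ M^n(R, f_a) ≤ F^n(R + 1) - K`. -/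
theorem maxMod_iterate_growth (K : ℝ) (hK : 1 ≤ K) (a : ℂ) (R : ℝ)
    (hR : max 3 (Real.log (1 + 2 * (‖a‖ + K))) ≤ R) (n : ℕ) (hn : 1 ≤ n) :
    R < Fgrowth^[n] (R - 1) + K ∧ Fgrowth^[n] (R - 1) + K ≤ (maxMod a)^[n] R ∧
      (maxMod a)^[n] R ≤ Fgrowth^[n] (R + 1) - K    := by
  have hR3 : 3 ≤ R := le_trans (le_max_left _ _) hR
  have hca : 0 ≤ ‖a‖ := norm_nonneg a
  set ca := ‖a‖ with hcadef
  have hpos : (0:ℝ) < 1 + 2 * (ca + K) := by linarith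
  have hRe : 1 + 2 * (ca + K) ≤ Real.exp R := by
    have h := le_trans (le_max_right 3 (Real.log (1 + 2 * (ca + K)))) hR
    calc 1 + 2 * (ca + K) = Real.exp (Real.log (1 + 2 * (ca + K))) := (Real.exp_log hpos).symm
      _ ≤ Real.exp R := Real.exp_le_exp.mpr h
  -- main two-sided bound by induction
  have key : ∀ m : ℕ, 1 ≤ m → Fgrowth^[m] (R - 1) + K ≤ (maxMod a)^[m] R ∧
      (maxMod a)^[m] R ≤ Fgrowth^[m] (R + 1) - K := by
    intro m hm
    induction m with
    | zero => omega
    | succ p ih =>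
      rcases Nat.eq_zero_or_pos p with hp | hp
      · subst hp
        obtain ⟨hlo, hhi⟩ := maxMod_bounds' a R (by linarith)
        simp only [zero_add, Function.iterate_one]
        constructor
        · have e1 := Real.exp_one_gt_d9
          have h4 : Real.exp R = Real.exp (R - 1) * Real.exp 1 := by
            rw [← Real.exp_add]; ring_nf
          have hpos1 := Real.exp_pos (R - 1)
          simp only [Fgrowth]
          nlinarith
        · have e1 := Real.exp_one_gt_d9
          have h4 : Real.exp (R + 1) = Real.exp R * Real.exp 1 := Real.exp_add R 1
          have hposR := Real.exp_pos R
          refine le_trans hhi ?_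
          simp only [Fgrowth]
          nlinarith
      · obtain ⟨hlo, hhi⟩ := ih hp
        have htlo : R - 1 ≤ Fgrowth^[p] (R - 1) := Fgrowth_iter_ge' p (R - 1)
        have hthi : R + 1 ≤ Fgrowth^[p] (R + 1) := Fgrowth_iter_ge' p (R + 1)
        have hMpos : 0 ≤ (maxMod a)^[p] R := by
          have : (0:ℝ) ≤ Fgrowth^[p] (R - 1) + K := by linarith
          linarith
        obtain ⟨hlo2, hhi2⟩ := maxMod_bounds' a ((maxMod a)^[p] R) hMpos
        rw [Function.iterate_succ_apply', Function.iterate_succ_apply',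
          Function.iterate_succ_apply']
        constructor
        · have hstep := Fgrowth_step_low' K ca R (Fgrowth^[p] (R - 1)) hK hca hRe htlo
          have hmono : Real.exp (Fgrowth^[p] (R - 1) + K) ≤ Real.exp ((maxMod a)^[p] R) :=
            Real.exp_le_exp.mpr (by linarith)
          calc Fgrowth (Fgrowth^[p] (R - 1)) + K
              ≤ Real.exp (Fgrowth^[p] (R - 1) + K) - ca := hstep
            _ ≤ Real.exp ((maxMod a)^[p] R) - ca := by linarith
            _ ≤ maxMod a ((maxMod a)^[p] R) := hlo2
        · have hstep := Fgrowth_step_up' K ca R (Fgrowth^[p] (R + 1)) hK hca hRe hthi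
          have hmono : Real.exp ((maxMod a)^[p] R) ≤ Real.exp (Fgrowth^[p] (R + 1) - K) :=
            Real.exp_le_exp.mpr (by linarith)
          calc maxMod a ((maxMod a)^[p] R)
              ≤ Real.exp ((maxMod a)^[p] R) + ca := hhi2
            _ ≤ Real.exp (Fgrowth^[p] (R + 1) - K) + ca := by linarith
            _ ≤ Fgrowth (Fgrowth^[p] (R + 1)) - K := hstep
  obtain ⟨h1, h2⟩ := key n hn
  refine ⟨?_, h1, h2⟩
  -- R < F^n(R-1) + K
  obtain ⟨m, rfl⟩ := Nat.exists_eq_add_of_le hn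
  have hnm : 1 + m = m + 1 := by omega
  rw [hnm, Function.iterate_succ_apply']
  have h3 : R - 1 ≤ Fgrowth^[m] (R - 1) := Fgrowth_iter_ge' m (R - 1)
  have h4 : R < Real.exp (R - 1) := by
    have := Real.add_one_lt_exp (x := R - 1) (by intro h; rw [sub_eq_zero] at h; linarith)
    linarith
  have h5 : Real.exp (R - 1) ≤ Real.exp (Fgrowth^[m] (R - 1)) := Real.exp_le_exp.mpr h3
  simp only [Fgrowth]
  linarith
end

section
/- For every a ∈ ℂ and every R > 0, the maximum modulus satisfies M(R, f_a) > R, where M(R, f_a) = max_{|z| = R} |e^z + a|. (In the paper's notation, R(f_a) = 0 for all a ∈ ℂ.) -/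
open Filter Set Metric Bornology

/-- For every `a ∈ ℂ` and every `R > 0`, the maximum modulus satisfies `M(R, f_a) > R`;
in other words, `R(f_a) = 0` for all `a ∈ ℂ`. -/
theorem maxMod_gt (a : ℂ) (R : ℝ) (hR : 0 < R) : R < maxMod a R := by
  have hbdd : BddAbove ((fun z => ‖expMap a z‖) '' Metric.sphere (0 : ℂ) R) :=
    ((isCompact_sphere (0:ℂ) R).image_of_continuousOn
      ((continuous_norm.comp
        (Complex.continuous_exp.add continuous_const)).continuousOn)).bddAbove
  have h1 : (R : ℂ) ∈ Metric.sphere (0 : ℂ) R := by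
    simp [Complex.norm_real, abs_of_pos hR]
  have h2 : (-(R : ℂ)) ∈ Metric.sphere (0 : ℂ) R := by
    simp [Complex.norm_real, abs_of_pos hR]
  have le1 : ‖expMap a (R : ℂ)‖ ≤ maxMod a R := le_csSup hbdd ⟨_, h1, rfl⟩
  have le2 : ‖expMap a (-(R : ℂ))‖ ≤ maxMod a R := le_csSup hbdd ⟨_, h2, rfl⟩
  have hdiff : expMap a (R : ℂ) - expMap a (-(R : ℂ)) = Complex.exp R - Complex.exp (-R) := by
    simp only [expMap]
    ring
  have habs : ‖expMap a (R : ℂ) - expMap a (-(R : ℂ))‖ = 2 * Real.sinh R := by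
    rw [hdiff, ← Complex.ofReal_neg, ← Complex.ofReal_exp, ← Complex.ofReal_exp,
      ← Complex.ofReal_sub, Complex.norm_real, Real.norm_eq_abs, Real.sinh_eq]
    rw [abs_of_nonneg]
    · ring
    · have := Real.exp_le_exp.mpr (by linarith : -R ≤ R)
      linarith
  have htri : ‖expMap a (R : ℂ) - expMap a (-(R : ℂ))‖ ≤
      ‖expMap a (R : ℂ)‖ + ‖expMap a (-(R : ℂ))‖ :=
    norm_sub_le _ _
  have hs := Real.self_lt_sinh_iff.mpr hR
  rw [habs] at htri
  linarith
end

section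
/- Let a ∈ ℂ and μ ≥ 0, and let F(t) = e^t − 1 with F^k its k-th iterate. Then there exists K ≥ μ + 2 (one may take K = max(2 + ln(5 + |a|), μ + 2)) such that the following holds for all z ∈ ℂ with Re z ≥ K: if n ≥ 0 is such that max(−Re f_a^k(z), |Im f_a^k(z)|) ≤ F^k(μ) for all 0 ≤ k < n, then |f_a^n(z)| ≥ F^n(Re z − 2). -/
open Filter Set Metric Bornology

lemma F_mono' : Monotone Fgrowth := fun _ _ h =>
  sub_le_sub_right (Real.exp_le_exp.mpr h) 1

lemma F_iter_mono' (k : ℕ) : Monotone (Fgrowth^[k]) := F_mono'.iterate k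

lemma F_nonneg' {s : ℝ} (h : 0 ≤ s) : 0 ≤ Fgrowth s := by
  simp only [Fgrowth, sub_nonneg]; exact Real.one_le_exp h

lemma le_F' {s : ℝ} (h : 0 ≤ s) : s ≤ Fgrowth s := by
  simp only [Fgrowth]; linarith [Real.add_one_le_exp s]

lemma F_iter_nonneg' (k : ℕ) {s : ℝ} (h : 0 ≤ s) : 0 ≤ Fgrowth^[k] s := by
  induction k with
  | zero => simpa
  | succ k ih => rw [Function.iterate_succ_apply']; exact F_nonneg' ih

lemma self_le_F_iter' (k : ℕ) {s : ℝ} (h : 0 ≤ s) : s ≤ Fgrowth^[k] s := by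
  induction k with
  | zero => simp
  | succ k ih =>
      rw [Function.iterate_succ_apply']
      exact le_trans ih (le_F' (le_trans h ih))

/-- **Continued growth.** For `a ∈ ℂ` and `μ ≥ 0` there is `K ≥ μ + 2` such that:
for all `z` with `Re z ≥ K`, if `n ≥ 0` satisfies
`max(-Re f_a^k(z), |Im f_a^k(z)|) ≤ F^k(μ)` for all `0 ≤ k < n`, then
`|f_a^n(z)| ≥ F^n(Re z - 2)`. -/
theorem continued_growth (a : ℂ) (μ : ℝ) (hμ : 0 ≤ μ) :
    ∃ K : ℝ, μ + 2 ≤ K ∧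
      ∀ z : ℂ, K ≤ z.re → ∀ n : ℕ,
        (∀ k < n, max (-(((expMap a)^[k] z).re)) |((expMap a)^[k] z).im| ≤ Fgrowth^[k] μ) →
        Fgrowth^[n] (z.re - 2) ≤ ‖(expMap a)^[n] z‖ := by
  refine ⟨max (2 + Real.log (5 + ‖a‖)) (μ + 2), le_max_right _ _, ?_⟩
  intro z hz n hyp
  set t := z.re - 2 with ht
  have habs : 0 ≤ ‖a‖ := norm_nonneg a
  have ht_mu : μ ≤ t := by
    have := le_trans (le_max_right _ _) hz; simp only [ht]; linarith
  have ht0 : 0 ≤ t := le_trans hμ ht_mu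
  have ht_log : Real.log (5 + ‖a‖) ≤ t := by
    have := le_trans (le_max_left _ _) hz; simp only [ht]; linarith
  have hFt : 4 + ‖a‖ ≤ Fgrowth t := by
    have h5 : (0:ℝ) < 5 + ‖a‖ := by linarith
    have h6 := Real.exp_le_exp.mpr ht_log
    rw [Real.exp_log h5] at h6
    simp only [Fgrowth]; linarith
  have he2 : (7:ℝ) ≤ Real.exp 2 := by
    have h := Real.exp_one_gt_d9
    have : Real.exp 2 = Real.exp 1 * Real.exp 1 := by
      rw [← Real.exp_add]; norm_num
    nlinarith
  -- lower bound for R = F^[k+1] t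
  have hR4 : ∀ k : ℕ, 4 + ‖a‖ ≤ Fgrowth^[k+1] t := by
    intro k
    rw [Function.iterate_succ_apply]
    exact le_trans hFt (self_le_F_iter' k (by linarith))
  -- key growth step
  have key : ∀ k : ℕ, Fgrowth^[k] t + 2 ≤ ((expMap a)^[k] z).re →
      6 * Fgrowth^[k+1] t + 11 ≤ ‖(expMap a)^[k+1] z‖ := by
    intro k hk
    set w := (expMap a)^[k] z with hw
    have hit : (expMap a)^[k+1] z = Complex.exp w + a := by
      rw [Function.iterate_succ_apply']; rfl
    have htri : Real.exp w.re - ‖a‖ ≤ ‖(expMap a)^[k+1] z‖ := by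
      rw [hit]
      have h1 := norm_add_le (Complex.exp w + a) (-a)
      simp only [add_neg_cancel_right, norm_neg] at h1
      rw [Complex.norm_exp] at h1
      linarith
    have hexp : Real.exp (Fgrowth^[k] t + 2) ≤ Real.exp w.re := Real.exp_le_exp.mpr hk
    have heq : Real.exp (Fgrowth^[k] t + 2) = (Fgrowth^[k+1] t + 1) * Real.exp 2 := by
      rw [Real.exp_add, Function.iterate_succ_apply']
      simp only [Fgrowth]; ring
    have hR := hR4 k
    nlinarith [hR4 k, he2, habs]
  -- main claim: real parts grow
  have claimA : ∀ k, k < n → Fgrowth^[k] t + 2 ≤ ((expMap a)^[k] z).re := by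
    intro k
    induction k with
    | zero => intro _; simp only [Function.iterate_zero, id_eq]; linarith
    | succ k ih =>
      intro hk1
      have hk : k < n := Nat.lt_of_succ_lt hk1
      have habs_u := key k (ih hk)
      set u := (expMap a)^[k+1] z with hu
      set R := Fgrowth^[k+1] t with hR
      set M := Fgrowth^[k+1] μ with hM
      have hMR : M ≤ R := F_iter_mono' (k+1) ht_mu
      have hM0 : 0 ≤ M := F_iter_nonneg' (k+1) hμ
      have hRa := hR4 k
      have hh := hyp (k+1) hk1
      have hre : -u.re ≤ M := le_trans (le_max_left _ _) hh
      have him : |u.im| ≤ M := le_trans (le_max_right _ _) hh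
      have him2 : u.im^2 ≤ M^2 := by
        have := abs_le.mp him
        nlinarith
      have hsq : u.re^2 + u.im^2 = (‖u‖)^2 := by
        rw [Complex.sq_norm, Complex.normSq_apply]; ring
      have hupos : 0 < u.re := by
        by_contra hcon
        push_neg at hcon
        have hre2 : u.re^2 ≤ M^2 := by nlinarith
        nlinarith
      have hsq2 : (R + 2)^2 ≤ u.re^2 := by nlinarith
      nlinarith
  -- conclude
  cases n with
  | zero =>
    simp only [Function.iterate_zero, id_eq]
    linarith [Complex.re_le_norm z]
  | succ m =>
    have h1 := key m (claimA m (Nat.lt_succ_self m))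
    have h2 : 0 ≤ Fgrowth^[m+1] t := F_iter_nonneg' (m+1) ht0
    linarith
end

section
/- Let a ∈ ℂ and suppose f_a(z) = e^z + a has an attracting periodic point p, i.e. f_a^m(p) = p for some m ≥ 1 with |(f_a^m)'(p)| < 1. Let C = {p, f_a(p), …, f_a^{m−1}(p)}. Then the singular value a is attracted to this cycle: dist(f_a^k(a), C) → 0 as k → ∞. -/
open Filter Set Metric Bornology

open Complex Topology

lemma differentiable_expMap (a : ℂ) : Differentiable ℂ (expMap a) := by
  unfold expMap; exact Complex.differentiable_exp.add_const a

lemma differentiable_expMap_iterate (a : ℂ) (k : ℕ) :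
    Differentiable ℂ ((expMap a)^[k]) :=
  (differentiable_expMap a).iterate k

lemma deriv_expMap (a z : ℂ) : deriv (expMap a) z = Complex.exp z := by
  unfold expMap
  rw [deriv_add_const]
  rw [Complex.deriv_exp]

lemma deriv_iterate_ne_zero (a : ℂ) (k : ℕ) (z : ℂ) :
    deriv ((expMap a)^[k]) z ≠ 0 := by
  induction k generalizing z with
  | zero => simp
  | succ n ih =>
    rw [Function.iterate_succ]
    rw [deriv_comp z ((differentiable_expMap_iterate a n).differentiableAt)
      ((differentiable_expMap a).differentiableAt)]
    exact mul_ne_zero (ih _) (by rw [deriv_expMap]; exact Complex.exp_ne_zero z)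

lemma deriv_iterate_fixed {g : ℂ → ℂ} (hg : Differentiable ℂ g) {q : ℂ} (hq : g q = q) (n : ℕ) :
    deriv (g^[n]) q = (deriv g q) ^ n := by
  induction n with
  | zero => simp
  | succ n ih =>
    rw [Function.iterate_succ']
    rw [deriv_comp q hg.differentiableAt (hg.iterate n).differentiableAt,
      Function.iterate_fixed hq, ih, pow_succ, mul_comm]

/-- Existence of a holomorphic logarithm of a nonvanishing holomorphic function on a ball. -/
lemma exists_log_on_ball {c : ℂ} {R : ℝ} (hR : 0 < R) {G : ℂ → ℂ}
    (hG : DifferentiableOn ℂ G (ball c R)) (hG0 : ∀ z ∈ ball c R, G z ≠ 0) :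
    ∃ L : ℂ → ℂ, DifferentiableOn ℂ L (ball c R) ∧ ∀ z ∈ ball c R, exp (L z) = G z := by
  have hco : c ∈ ball c R := mem_ball_self hR
  have hopen : IsOpen (ball c R) := isOpen_ball
  have hGd : ∀ z ∈ ball c R, DifferentiableAt ℂ G z := fun z hz =>
    hG.differentiableAt (hopen.mem_nhds hz)
  have hG' : ContinuousOn (deriv G) (ball c R) :=
    ((hG.analyticOnNhd hopen).deriv).continuousOn
  set φ : ℂ → ℂ := fun z => deriv G z / G z with hφdef
  have hφ : ContinuousOn φ (ball c R) := hG'.div hG.continuousOn hG0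
  -- clamp function
  set pr : ℝ → ℝ := fun t => max 0 (min t 1) with hprdef
  have hprc : Continuous pr := continuous_const.max (continuous_id.min continuous_const)
  have hpr0 : ∀ t, 0 ≤ pr t := fun t => le_max_left _ _
  have hpr1 : ∀ t, pr t ≤ 1 := fun t => max_le zero_le_one (min_le_right _ _)
  have hpreq : ∀ t ∈ Icc (0:ℝ) 1, pr t = t := by
    intro t ht
    simp only [hprdef]
    rw [min_eq_left ht.2, max_eq_right ht.1]
  have hγmem : ∀ z ∈ ball c R, ∀ t : ℝ, c + pr t • (z - c) ∈ ball c R := by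
    intro z hz t
    rw [mem_ball, dist_eq_norm]
    have : c + pr t • (z - c) - c = pr t • (z - c) := by ring_nf
    rw [this, norm_smul, Real.norm_eq_abs, _root_.abs_of_nonneg (hpr0 t)]
    calc pr t * ‖z - c‖ ≤ 1 * ‖z - c‖ :=
          mul_le_mul_of_nonneg_right (hpr1 t) (norm_nonneg _)
      _ = ‖z - c‖ := one_mul _
      _ < R := by rw [← dist_eq_norm]; exact mem_ball.1 hz
  set L : ℂ → ℂ := fun z =>
    Complex.log (G c) + ∫ t in (0:ℝ)..1, (z - c) * φ (c + pr t • (z - c)) with hLdef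
  -- functional equation
  have key : ∀ z ∈ ball c R, exp (L z) = G z := by
    intro z hz
    set w : ℂ := z - c with hwdef
    set γ : ℝ → ℂ := fun t => c + pr t • w with hγdef
    have hγm : ∀ t, γ t ∈ ball c R := fun t => hγmem z hz t
    have hγcont : Continuous γ := continuous_const.add (hprc.smul continuous_const)
    set ζ : ℝ → ℂ := fun t => w * φ (γ t) with hζdef
    have hζ : Continuous ζ := continuous_const.mul (hφ.comp_continuous hγcont hγm)
    set u : ℝ → ℂ := fun t => Complex.log (G c) + ∫ s in (0:ℝ)..t, ζ s with hudef
    have hu : ∀ t : ℝ, HasDerivAt u (ζ t) t := by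
      intro t
      exact (intervalIntegral.integral_hasDerivAt_right
        (hζ.intervalIntegrable _ _)
        hζ.stronglyMeasurable.stronglyMeasurableAtFilter
        hζ.continuousAt).const_add _
    set E : ℝ → ℂ := fun t => G (γ t) * exp (-u t) with hEdef
    have hE : ∀ t ∈ Icc (0:ℝ) 1, HasDerivWithinAt E 0 (Icc (0:ℝ) 1) t := by
      intro t ht
      have hγt : HasDerivWithinAt γ w (Icc (0:ℝ) 1) t := by
        have base : HasDerivWithinAt (fun s : ℝ => c + s • w) ((1:ℝ) • w) (Icc (0:ℝ) 1) t :=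
          (((hasDerivAt_id t).smul_const w).const_add c).hasDerivWithinAt
        rw [one_smul] at base
        refine base.congr (fun s hs => ?_) (by simp only [hγdef]; rw [hpreq t ht])
        simp only [hγdef]; rw [hpreq s hs]
      have hgγ : HasDerivWithinAt (fun s => G (γ s)) (w • deriv G (γ t)) (Icc (0:ℝ) 1) t :=
        ((hGd _ (hγm t)).hasDerivAt.scomp_hasDerivWithinAt t hγt)
      have hexpu : HasDerivWithinAt (fun s => exp (-u s)) (exp (-u t) * (-ζ t)) (Icc (0:ℝ) 1) t :=
        ((hu t).neg.hasDerivWithinAt).cexp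
      have hmul := hgγ.mul hexpu
      have hcancel : w • deriv G (γ t) * exp (-u t) + G (γ t) * (exp (-u t) * (-ζ t)) = 0 := by
        have hne : G (γ t) ≠ 0 := hG0 _ (hγm t)
        simp only [hζdef, hφdef, smul_eq_mul]
        field_simp
        ring
      rwa [hcancel] at hmul
    have h10 : ‖E 1 - E 0‖ ≤ 0 := by
      have := norm_image_sub_le_of_norm_deriv_le_segment_01' hE
        (fun x _ => by rw [norm_zero])
      simpa using this
    have hE10 : E 1 = E 0 := by
      have := norm_le_zero_iff.1 h10
      exact sub_eq_zero.1 this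
    have hγ0 : γ 0 = c := by
      simp [hγdef, hprdef]
    have hγ1 : γ 1 = z := by
      have : pr 1 = 1 := hpreq 1 (by norm_num)
      simp [hγdef, this, hwdef]
    have hu0 : u 0 = Complex.log (G c) := by
      simp [hudef]
    have hu1 : u 1 = L z := by
      simp only [hudef, hLdef, hζdef, hγdef, hwdef]
    have hE0 : E 0 = 1 := by
      rw [hEdef]
      simp only [hγ0, hu0]
      rw [exp_neg, exp_log (hG0 c hco)]
      exact mul_inv_cancel₀ (hG0 c hco)
    have hE1 : E 1 = G z * (exp (L z))⁻¹ := by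
      rw [hEdef]
      simp only [hγ1, hu1, exp_neg]
    rw [hE1, hE0] at hE10
    have := (mul_inv_eq_one₀ (exp_ne_zero (L z))).1 hE10
    exact this.symm
  -- continuity
  have hLc : ContinuousOn L (ball c R) := by
    rw [continuousOn_iff_continuous_restrict]
    have huncurry : Continuous (Function.uncurry
        (fun (z : ↥(ball c R)) (t : ℝ) => ((z : ℂ) - c) * φ (c + pr t • ((z : ℂ) - c)))) := by
      apply Continuous.mul
      · exact (continuous_subtype_val.comp continuous_fst).sub continuous_const
      · apply hφ.comp_continuous
        · exact continuous_const.add ((hprc.comp continuous_snd).smul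
            ((continuous_subtype_val.comp continuous_fst).sub continuous_const))
        · exact fun p => hγmem _ p.1.2 _
    have := intervalIntegral.continuous_parametric_intervalIntegral_of_continuous' (μ := MeasureTheory.volume)
      huncurry 0 1
    exact continuous_const.add this
  -- differentiability
  have hLd : DifferentiableOn ℂ L (ball c R) := by
    intro z₀ hz₀
    have hmem : ball c R ∈ 𝓝 z₀ := hopen.mem_nhds hz₀
    have hGz₀ : G z₀ ≠ 0 := hG0 _ hz₀
    set Q : ℂ → ℂ := fun z => L z₀ + Complex.log (G z / G z₀) with hQdef
    have hd0 : ContinuousAt (fun z => L z - L z₀ - Complex.log (G z / G z₀)) z₀ := by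
      have h1 : ContinuousAt L z₀ := hLc.continuousAt hmem
      have h2 : ContinuousAt (fun z => G z / G z₀) z₀ :=
        (hG.continuousOn.continuousAt hmem).div_const _
      have h3 : ContinuousAt (fun z => Complex.log (G z / G z₀)) z₀ :=
        (continuousAt_clog (by rw [div_self hGz₀, Complex.mem_slitPlane_iff]; simp)).comp h2
      exact (h1.sub continuousAt_const).sub h3
    have hval : (fun z => L z - L z₀ - Complex.log (G z / G z₀)) z₀ = 0 := by
      simp [div_self hGz₀, Complex.log_one]
    have h0 : Tendsto (fun z => L z - L z₀ - Complex.log (G z / G z₀)) (𝓝 z₀) (𝓝 0) := by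
      have := hd0.tendsto
      simpa [div_self hGz₀, Complex.log_one] using this
    have hsmall : ∀ᶠ z in 𝓝 z₀,
        ‖L z - L z₀ - Complex.log (G z / G z₀)‖ < 1 := by
      have := Metric.tendsto_nhds.mp h0 1 one_pos
      simpa [dist_eq_norm] using this
    have hexp1 : ∀ᶠ z in 𝓝 z₀, exp (L z - L z₀ - Complex.log (G z / G z₀)) = 1 := by
      filter_upwards [hmem] with z hz
      rw [exp_sub, exp_sub, key z hz, key z₀ hz₀, exp_log (div_ne_zero (hG0 z hz) hGz₀)]
      field_simp
      try rw [div_self (hG0 z hz)]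
    have heq : L =ᶠ[𝓝 z₀] Q := by
      filter_upwards [hsmall, hexp1] with z h1 h2
      rcases Complex.exp_eq_one_iff.1 h2 with ⟨n, hn⟩
      have hn0 : n = 0 := by
        by_contra hne
        have : (1:ℝ) ≤ |(n:ℝ)| := by
          rcases Int.one_le_abs (by exact_mod_cast hne) with h
          exact_mod_cast h
        have hnorm : ‖(n : ℂ) * (2 * ↑Real.pi * I)‖ = |(n:ℝ)| * (2 * Real.pi) := by
          simp [norm_mul, Complex.norm_intCast, Complex.norm_I, abs_of_pos Real.pi_pos]
          try ring
        rw [hn, hnorm] at h1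
        nlinarith [Real.pi_gt_three]
      rw [hn0, Int.cast_zero, zero_mul] at hn
      have hfin : L z = L z₀ + Complex.log (G z / G z₀) := by linear_combination hn
      simpa [hQdef] using hfin
    have hQd : DifferentiableAt ℂ Q z₀ := by
      have hdiv : DifferentiableAt ℂ (fun z => G z / G z₀) z₀ := (hGd _ hz₀).div_const _
      have hlog : DifferentiableAt ℂ (fun z => Complex.log (G z / G z₀)) z₀ :=
        (differentiableAt_log (by rw [div_self hGz₀, Complex.mem_slitPlane_iff]; simp)).comp
          z₀ hdiv
      exact (differentiableAt_const _).add hlog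
    exact (heq.differentiableAt_iff.2 hQd).differentiableWithinAt
  exact ⟨L, hLd, key⟩

-- op norm of right multiplication
lemma clm_mul_norm (M : ℂ →L[ℂ] ℂ) (d : ℂ) (h : ∀ x, M x = x * d) : ‖M‖ = ‖d‖ := by
  apply le_antisymm
  · apply ContinuousLinearMap.opNorm_le_bound M (norm_nonneg d)
    intro x
    rw [h x, norm_mul, mul_comm]
  · have := M.le_opNorm 1
    rw [h 1, one_mul, norm_one, mul_one] at this
    exact this

/-- Landau-type bound: if `H` is holomorphic and injective on `ball p (2r)` and omits `ω`,
then `r * ‖H'(p)‖ ≤ 300 * ‖H p - ω‖`. -/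
lemma weak_koebe {p : ℂ} {r : ℝ} (hr : 0 < r) {H : ℂ → ℂ} {ω : ℂ}
    (hH : DifferentiableOn ℂ H (ball p (2*r))) (hinj : InjOn H (ball p (2*r)))
    (hω : ∀ z ∈ ball p (2*r), H z ≠ ω) :
    r * ‖deriv H p‖ ≤ 300 * ‖H p - ω‖ := by
  have h2r : 0 < 2*r := by linarith
  have hpball : p ∈ ball p (2*r) := mem_ball_self h2r
  have hcb_sub : closedBall p r ⊆ ball p (2*r) := by
    intro z hz
    rw [mem_closedBall] at hz
    rw [mem_ball]
    linarith
  obtain ⟨L, hLd, hLkey⟩ := exists_log_on_ball h2r (hH.sub_const ω)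
    (fun z hz => sub_ne_zero.2 (hω z hz))
  -- no two values of L on the ball differ by 2πi
  have no2pi : ∀ z₁ ∈ ball p (2*r), ∀ z₂ ∈ ball p (2*r),
      L z₁ ≠ L z₂ + 2 * Real.pi * I := by
    intro z₁ h₁ z₂ h₂ heq
    have : H z₁ - ω = H z₂ - ω := by
      rw [← hLkey z₁ h₁, ← hLkey z₂ h₂, heq, Complex.exp_add]
      have : Complex.exp (2 * Real.pi * I) = 1 := Complex.exp_two_pi_mul_I
      rw [this, mul_one]
    have hz12 : z₁ = z₂ := hinj h₁ h₂ (sub_left_inj.1 this)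
    rw [hz12] at heq
    have h0 : (2 : ℂ) * Real.pi * I = 0 := by linear_combination -heq
    simp [Complex.ext_iff, Real.pi_ne_zero] at h0
  -- the derivative of L is continuous (indeed analytic) on the ball
  have hLanalytic := hLd.analyticOnNhd isOpen_ball
  have hL'd : DifferentiableOn ℂ (deriv L) (ball p (2*r)) :=
    hLanalytic.deriv.differentiableOn
  have hL'c : ContinuousOn (deriv L) (ball p (2*r)) := hLanalytic.deriv.continuousOn
  -- derivative identity : deriv H z = exp (L z) * deriv L z on the ball
  have hderivH : ∀ z ∈ ball p (2*r), deriv H z = Complex.exp (L z) * deriv L z := by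
    intro z hz
    have hev : H =ᶠ[𝓝 z] fun ζ => Complex.exp (L ζ) + ω := by
      filter_upwards [isOpen_ball.mem_nhds hz] with ζ hζ
      rw [hLkey ζ hζ]; ring
    rw [hev.deriv_eq]
    have hLz : HasDerivAt L (deriv L z) z :=
      (hLd.differentiableAt (isOpen_ball.mem_nhds hz)).hasDerivAt
    exact (hLz.cexp.add_const ω).deriv
  -- the extremal function
  set u : ℂ → ℝ := fun z => ‖deriv L z‖ * (r - dist z p) with hudef
  have hucont : ContinuousOn u (closedBall p r) := by
    apply ContinuousOn.mul
    · exact (hL'c.mono hcb_sub).norm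
    · exact (continuous_const.sub (continuous_id.dist continuous_const)).continuousOn
  obtain ⟨zs, hzs, hmax⟩ :=
    (isCompact_closedBall p r).exists_isMaxOn ⟨p, mem_closedBall_self hr.le⟩ hucont
  have hmax' : ∀ z ∈ closedBall p r, u z ≤ u zs := hmax
  set V : ℝ := u zs with hVdef
  have hupV : r * ‖deriv L p‖ ≤ V := by
    have := hmax' p (mem_closedBall_self hr.le)
    simpa [hudef, mul_comm] using this
  -- main claim : V ≤ 300
  have hV300 : V ≤ 300 := by
    by_contra hVc
    push_neg at hVc
    have hVpos : 0 < V := by linarith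
    have hzsr : dist zs p < r := by
      by_contra hge
      push_neg at hge
      have : V ≤ 0 := by
        have h1 : r - dist zs p ≤ 0 := by linarith
        have := mul_nonpos_of_nonneg_of_nonpos (norm_nonneg (deriv L zs)) h1
        simpa [hVdef, hudef] using this
      linarith
    set ρ : ℝ := (r - dist zs p)/2 with hρdef
    have hρpos : 0 < ρ := by simp [hρdef]; linarith
    set K : ℝ := V / ρ with hKdef
    have hKpos : 0 < K := div_pos hVpos hρpos
    have h4 : dist zs p = r - 2*ρ := by rw [hρdef]; ring
    have hc₀ : ‖deriv L zs‖ = K / 2 := by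
      have h2ρ : r - dist zs p = 2*ρ := by rw [hρdef]; ring
      have hV2 : V = ‖deriv L zs‖ * (2*ρ) := by rw [hVdef, hudef]; simp only; rw [h2ρ]
      have hKval : K = 2 * ‖deriv L zs‖ := by
        calc K = ‖deriv L zs‖ * (2*ρ) / ρ := by rw [hKdef, hV2]
          _ = 2 * ‖deriv L zs‖ := by field_simp [hρpos.ne']
      rw [hKval]; ring
    -- bound on deriv L in the region dist z p ≤ r - ρ
    have bound2 : ∀ z, dist z p ≤ r - ρ → ‖deriv L z‖ ≤ K := by
      intro z hzp
      have hzcb : z ∈ closedBall p r := by rw [mem_closedBall]; linarith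
      have h1 : ‖deriv L z‖ * (r - dist z p) ≤ V := hmax' z hzcb
      have h2 : ρ ≤ r - dist z p := by linarith
      have h3 : ‖deriv L z‖ * ρ ≤ V := by
        calc ‖deriv L z‖ * ρ ≤ ‖deriv L z‖ * (r - dist z p) :=
              mul_le_mul_of_nonneg_left h2 (norm_nonneg _)
          _ ≤ V := h1
      rw [hKdef]
      rw [le_div_iff₀ hρpos]
      exact h3
    set δ : ℝ := ρ/16 with hδdef
    have hδpos : 0 < δ := by rw [hδdef]; linarith
    -- second derivative bound on closedBall zs δ
    have bound3 : ∀ z ∈ closedBall zs δ, ‖deriv (deriv L) z‖ ≤ 2*K/ρ := by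
      intro z hz
      rw [mem_closedBall] at hz
      have hρ2 : (0:ℝ) < ρ/2 := by linarith
      have hreach : ∀ w, dist w z ≤ ρ/2 → dist w p ≤ r - ρ := by
        intro w hw
        have h5 : dist w p ≤ dist w z + dist z zs + dist zs p := dist_triangle4 w z zs p
        rw [h4] at h5
        rw [hδdef] at hz
        linarith
      have hsub : closedBall z (ρ/2) ⊆ ball p (2*r) := by
        intro w hw
        rw [mem_closedBall] at hw
        rw [mem_ball]
        have := hreach w hw
        linarith
      have hd : DiffContOnCl ℂ (deriv L) (ball z (ρ/2)) :=
        hL'd.diffContOnCl_ball hsub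
      have hsphere : ∀ w ∈ sphere z (ρ/2), ‖deriv L w‖ ≤ K := by
        intro w hw
        have hw' : w ∈ closedBall z (ρ/2) := sphere_subset_closedBall hw
        rw [mem_closedBall] at hw'
        exact bound2 w (hreach w hw')
      have := Complex.norm_deriv_le_of_forall_mem_sphere_norm_le hρ2 hd hsphere
      calc ‖deriv (deriv L) z‖ ≤ K / (ρ/2) := this
        _ = 2*K/ρ := by field_simp
    -- Lipschitz bound for deriv L on closedBall zs δ
    have hcbsub : closedBall zs δ ⊆ ball p (2*r) := by
      intro w hw
      rw [mem_closedBall] at hw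
      apply hcb_sub
      rw [mem_closedBall]
      have h5 : dist w p ≤ dist w zs + dist zs p := dist_triangle w zs p
      rw [h4] at h5
      rw [hδdef] at hw
      linarith
    have lip : ∀ x ∈ closedBall zs δ, ∀ y ∈ closedBall zs δ,
        ‖deriv L x - deriv L y‖ ≤ (2*K/ρ) * ‖x - y‖ := by
      intro x hx y hy
      have := (convex_closedBall zs δ).norm_image_sub_le_of_norm_hasFDerivWithin_le
        (f := deriv L)
        (f' := fun z => ContinuousLinearMap.smulRight (1 : ℂ →L[ℂ] ℂ) (deriv (deriv L) z))
        (fun z hz => by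
          have : HasDerivAt (deriv L) (deriv (deriv L) z) z :=
            (hL'd.differentiableAt (isOpen_ball.mem_nhds (hcbsub hz))).hasDerivAt
          exact (hasDerivAt_iff_hasFDerivAt.1 this).hasFDerivWithinAt)
        (fun z hz => by
          rw [ContinuousLinearMap.norm_smulRight_apply, norm_one, one_mul]
          exact bound3 z hz)
        hy hx
      exact this
    set c₀ : ℂ := deriv L zs with hc₀def
    have hc₀ne : c₀ ≠ 0 := by
      intro h
      rw [h, norm_zero] at hc₀
      have : K = 0 := by linarith
      linarith
    -- approximates linear on
    set Aeq : ℂ ≃L[ℂ] ℂ := ContinuousLinearEquiv.unitsEquivAut ℂ (Units.mk0 c₀ hc₀ne) with hAdef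
    have hAapp : ∀ x : ℂ, (Aeq : ℂ →L[ℂ] ℂ) x = x * c₀ := by
      intro x
      rw [hAdef, ContinuousLinearEquiv.coe_coe,
        ContinuousLinearEquiv.unitsEquivAut_apply, Units.val_mk0]
    have approx : ApproximatesLinearOn L (Aeq : ℂ →L[ℂ] ℂ) (closedBall zs δ)
        (Real.toNNReal (K/8)) := by
      intro x hx y hy
      have hmvt := (convex_closedBall zs δ).norm_image_sub_le_of_norm_hasFDerivWithin_le
        (f := fun z => L z - z * c₀)
        (f' := fun z => ContinuousLinearMap.smulRight (1 : ℂ →L[ℂ] ℂ) (deriv L z - c₀))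
        (fun z hz => by
          have h1 : HasDerivAt L (deriv L z) z :=
            (hLd.differentiableAt (isOpen_ball.mem_nhds (hcbsub hz))).hasDerivAt
          have h2 : HasDerivAt (fun z : ℂ => z * c₀) c₀ z := by
            simpa using (hasDerivAt_id z).mul_const c₀
          exact (hasDerivAt_iff_hasFDerivAt.1 (h1.sub h2)).hasFDerivWithinAt)
        (fun z hz => by
          rw [ContinuousLinearMap.norm_smulRight_apply, norm_one, one_mul]
          have h1 : ‖deriv L z - deriv L zs‖ ≤ (2*K/ρ) * ‖z - zs‖ :=
            lip z hz zs (mem_closedBall_self hδpos.le)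
          have h2 : ‖z - zs‖ ≤ δ := by
            rw [← dist_eq_norm]; exact mem_closedBall.1 hz
          calc ‖deriv L z - c₀‖ ≤ (2*K/ρ) * δ := by
                rw [hc₀def]
                calc ‖deriv L z - deriv L zs‖ ≤ (2*K/ρ) * ‖z - zs‖ := h1
                  _ ≤ (2*K/ρ) * δ := by
                      apply mul_le_mul_of_nonneg_left h2
                      positivity
            _ = K/8 := by rw [hδdef]; field_simp; ring)
        hy hx
      have hval : Real.toNNReal (K/8) * ‖x - y‖ = (K/8) * ‖x - y‖ := by
        rw [Real.coe_toNNReal]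
        positivity
      calc ‖L x - L y - (Aeq : ℂ →L[ℂ] ℂ) (x - y)‖
          = ‖(L x - x * c₀) - (L y - y * c₀)‖ := by rw [hAapp]; ring_nf
        _ ≤ (K/8) * ‖x - y‖ := hmvt
        _ = Real.toNNReal (K/8) * ‖x - y‖ := hval.symm
    -- surjectivity onto a ball of radius 3V/128 around L zs
    have hsymm_norm : ‖(Aeq.symm : ℂ →L[ℂ] ℂ)‖ = ‖c₀‖⁻¹ := by
      have happ : ∀ x : ℂ, (Aeq.symm : ℂ →L[ℂ] ℂ) x = x * c₀⁻¹ := by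
        intro x
        rw [hAdef, ContinuousLinearEquiv.coe_coe,
          ContinuousLinearEquiv.unitsEquivAut_apply_symm, Units.val_inv_eq_inv_val, Units.val_mk0]
      rw [clm_mul_norm _ _ happ, norm_inv]
    have hsurj := approx.surjOn_closedBall_of_nonlinearRightInverse
      Aeq.toNonlinearRightInverse hδpos.le (subset_refl _)
    -- the radius is big
    have hnn : ((Aeq.toNonlinearRightInverse.nnnorm : ℝ)⁻¹ -
        (Real.toNNReal (K/8) : ℝ)) * δ ≥ 2 * Real.pi := by
      have h1 : (Aeq.toNonlinearRightInverse.nnnorm : ℝ) = ‖c₀‖⁻¹ := by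
        have : Aeq.toNonlinearRightInverse.nnnorm = ‖(Aeq.symm : ℂ →L[ℂ] ℂ)‖₊ := rfl
        rw [this, coe_nnnorm, hsymm_norm]
      have h2 : (Real.toNNReal (K/8) : ℝ) = K/8 := by
        rw [Real.coe_toNNReal]; positivity
      rw [h1, h2, inv_inv, hc₀]
      have : (K/2 - K/8) * δ = 3*V/128 := by
        rw [hδdef, hKdef]
        field_simp
        ring
      rw [this]
      have hpi : Real.pi ≤ 3.15 := by linarith [Real.pi_lt_d2]
      linarith
    have hmem : L zs + 2 * Real.pi * I ∈
        closedBall (L zs) (((Aeq.toNonlinearRightInverse.nnnorm : ℝ)⁻¹ -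
          (Real.toNNReal (K/8) : ℝ)) * δ) := by
      rw [mem_closedBall, dist_eq_norm]
      have : L zs + 2 * Real.pi * I - L zs = 2 * Real.pi * I := by ring
      rw [this]
      have h2pi : ‖(2 : ℂ) * Real.pi * I‖ = 2 * Real.pi := by
        simp [norm_mul, Complex.norm_real, Complex.norm_I]
        try rw [_root_.abs_of_pos Real.pi_pos]
        try exact Real.pi_pos.le
      rw [h2pi]
      exact hnn
    obtain ⟨z₂, hz₂mem, hz₂⟩ := hsurj hmem
    have hz₂ball : z₂ ∈ ball p (2*r) := hcbsub hz₂mem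
    have hzsball : zs ∈ ball p (2*r) := hcb_sub hzs
    exact no2pi z₂ hz₂ball zs hzsball hz₂
  -- conclude
  have hHp : Complex.exp (L p) = H p - ω := hLkey p hpball
  have hd : deriv H p = Complex.exp (L p) * deriv L p := hderivH p hpball
  rw [hd, norm_mul, hHp]
  calc r * (‖H p - ω‖ * ‖deriv L p‖) = ‖H p - ω‖ * (r * ‖deriv L p‖) := by ring
    _ ≤ ‖H p - ω‖ * 300 := by
        apply mul_le_mul_of_nonneg_left _ (norm_nonneg _)
        linarith [hupV, hV300]
    _ = 300 * ‖H p - ω‖ := by ring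

lemma tendsto_of_mod (m : ℕ) (hm : 1 ≤ m) (u : ℕ → ℝ)
    (h : ∀ s < m, Tendsto (fun q => u (q * m + s)) atTop (nhds 0)) :
    Tendsto u atTop (nhds 0) := by
  rw [Metric.tendsto_atTop]
  intro ε hε
  have hN : ∀ s, s < m → ∃ N, ∀ q ≥ N, dist (u (q*m+s)) 0 < ε := by
    intro s hs
    exact Metric.tendsto_atTop.1 (h s hs) ε hε
  choose! N hNs using hN
  refine ⟨m * ((Finset.range m).sup N + 1), fun k hk => ?_⟩
  have hs : k % m < m := Nat.mod_lt _ hm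
  have hq : (Finset.range m).sup N ≤ k / m := by
    have h2 := Nat.div_le_div_right (c := m) hk
    rw [Nat.mul_div_cancel_left _ (by omega : 0 < m)] at h2
    omega
  have hk' : k / m * m + k % m = k := Nat.div_add_mod' k m
  have := hNs (k % m) hs (k / m) (le_trans (Finset.le_sup (Finset.mem_range.2 hs)) hq)
  rwa [hk'] at this

lemma attracting_ball (a p : ℂ) (m : ℕ) (hm : 1 ≤ m) (hper : (expMap a)^[m] p = p)
    (hattr : ‖deriv ((expMap a)^[m]) p‖ < 1) :
    ∃ r > (0:ℝ), ∀ z ∈ ball p r,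
      Tendsto (fun k => Metric.infDist ((expMap a)^[k] z) (cycleSet a p m)) atTop (nhds 0) := by
  set f := expMap a with hfdef
  set g := f^[m] with hgdef
  set lam := deriv g p with hlamdef
  set κ : ℝ := (1 + ‖lam‖)/2 with hκdef
  have hκ1 : κ < 1 := by rw [hκdef]; linarith
  have hκ0 : 0 ≤ κ := by rw [hκdef]; positivity
  have hg : HasDerivAt g lam p :=
    ((differentiable_expMap_iterate a m).differentiableAt).hasDerivAt
  have hlittle := (hasDerivAt_iff_isLittleO.1 hg)
  have heps : (0:ℝ) < (1 - ‖lam‖)/2 := by linarith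
  have hev := (Asymptotics.isLittleO_iff.1 hlittle) heps
  rw [Metric.eventually_nhds_iff] at hev
  obtain ⟨δ, hδ, hδs⟩ := hev
  have hcon : ∀ z, dist z p < δ → dist (g z) p ≤ κ * dist z p := by
    intro z hz
    have h1 := hδs hz
    have h2 : g z - p = (g z - g p - (z - p) • lam) + (z - p) • lam := by
      rw [hper, smul_eq_mul]; ring
    rw [dist_eq_norm, h2]
    calc ‖(g z - g p - (z - p) • lam) + (z - p) • lam‖
        ≤ ‖g z - g p - (z - p) • lam‖ + ‖(z - p) • lam‖ := norm_add_le _ _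
      _ ≤ (1 - ‖lam‖)/2 * ‖z - p‖ + ‖z - p‖ * ‖lam‖ := by
          rw [smul_eq_mul, norm_mul]
          gcongr
          exact h1
      _ = κ * ‖z - p‖ := by rw [hκdef]; ring
      _ = κ * dist z p := by rw [dist_eq_norm]
  have hiter : ∀ z, dist z p < δ → ∀ q : ℕ, dist (g^[q] z) p ≤ κ^q * dist z p := by
    intro z hz
    intro q
    induction q with
    | zero => simp
    | succ q ih =>
      have hineq : dist (g^[q] z) p < δ := by
        have h3 : κ^q ≤ 1 := pow_le_one₀ hκ0 hκ1.le
        have h4 : κ^q * dist z p ≤ dist z p := by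
          calc κ^q * dist z p ≤ 1 * dist z p :=
                mul_le_mul_of_nonneg_right h3 dist_nonneg
            _ = dist z p := one_mul _
        calc dist (g^[q] z) p ≤ κ^q * dist z p := ih
          _ ≤ dist z p := h4
          _ < δ := hz
      rw [Function.iterate_succ_apply']
      calc dist (g (g^[q] z)) p ≤ κ * dist (g^[q] z) p := hcon _ hineq
        _ ≤ κ * (κ^q * dist z p) := mul_le_mul_of_nonneg_left ih hκ0
        _ = κ^(q+1) * dist z p := by ring
  refine ⟨δ/2, by linarith, fun z hz => ?_⟩
  have hzd : dist z p < δ := by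
    have := mem_ball.1 hz
    linarith
  have hgq : Tendsto (fun q => g^[q] z) atTop (nhds p) := by
    rw [tendsto_iff_dist_tendsto_zero]
    apply squeeze_zero (fun q => dist_nonneg) (fun q => hiter z hzd q)
    have := (tendsto_pow_atTop_nhds_zero_of_lt_one hκ0 hκ1).mul_const (dist z p)
    simpa using this
  apply tendsto_of_mod m hm
  intro s hs
  have h5 : Tendsto (fun q => (f^[s]) (g^[q] z)) atTop (nhds (f^[s] p)) :=
    (((differentiable_expMap_iterate a s).continuous.tendsto p).comp hgq)
  have h6 : Tendsto (fun q => Metric.infDist ((f^[s]) (g^[q] z)) (cycleSet a p m)) atTop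
      (nhds (Metric.infDist (f^[s] p) (cycleSet a p m))) :=
    ((continuous_infDist_pt (cycleSet a p m)).tendsto _).comp h5
  have h7 : Metric.infDist (f^[s] p) (cycleSet a p m) = 0 := by
    apply Metric.infDist_zero_of_mem
    exact ⟨s, hs, rfl⟩
  rw [h7] at h6
  have h8 : ∀ q : ℕ, (f^[s]) (g^[q] z) = f^[q * m + s] z := by
    intro q
    rw [hgdef, ← Function.iterate_mul, ← Function.iterate_add_apply]
    congr 1
    ring
  rw [show (fun q => Metric.infDist ((f^[s]) (g^[q] z)) (cycleSet a p m))
      = fun q => Metric.infDist (f^[q*m+s] z) (cycleSet a p m) from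
    funext (fun q => by rw [h8 q])] at h6
  exact h6

lemma basin_backward (a : ℂ) (C : Set ℂ) (w : ℂ) (k : ℕ)
    (h : Tendsto (fun j => Metric.infDist ((expMap a)^[j] ((expMap a)^[k] w)) C) atTop (nhds 0)) :
    Tendsto (fun j => Metric.infDist ((expMap a)^[j] w) C) atTop (nhds 0) := by
  rw [show (fun j => Metric.infDist ((expMap a)^[j] ((expMap a)^[k] w)) C)
      = fun j => Metric.infDist ((expMap a)^[j + k] w) C from
    funext (fun j => by rw [← Function.iterate_add_apply])] at h
  exact (tendsto_add_atTop_iff_nat k).1 h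

/-- If `f_a` has an attracting periodic point `p` of period `m`, then the singular
value `a` is attracted to the cycle `{p, f_a(p), …, f_a^{m-1}(p)}`. -/
theorem singular_value_attracted_to_cycle (a p : ℂ) (m : ℕ) (hm : 1 ≤ m)
    (hper : (expMap a)^[m] p = p)
    (hattr : ‖deriv ((expMap a)^[m]) p‖ < 1) :
    Tendsto (fun k => Metric.infDist ((expMap a)^[k] a) (cycleSet a p m)) atTop
      (nhds 0) := by
  by_contra hnot
  have hattr' : ‖deriv ((expMap a)^[m]) p‖ < 1 := by
    exact hattr
  obtain ⟨r₀, hr₀, hbasin⟩ := attracting_ball a p m hm hper hattr'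
  set f := expMap a with hfdef
  set C := cycleSet a p m with hCdef
  have hpball : p ∈ ball p r₀ := mem_ball_self hr₀
  -- if some branch value hits `a`, then `a` would be in the basin
  have hHa' : ∀ (k : ℕ) (H : ℂ → ℂ), (∀ z ∈ ball p r₀, f^[k] (H z) = z) →
      ∀ z ∈ ball p r₀, H z ≠ a := by
    intro k H hk z hz heq
    apply hnot
    apply basin_backward a C a k
    have h1 : f^[k] a = z := by rw [← heq]; exact hk z hz
    rw [h1]
    exact hbasin z hz
  -- construction of inverse branches
  have branch : ∀ N : ℕ, f^[N] p = p → ∀ j, j ≤ N → ∃ H : ℂ → ℂ,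
      DifferentiableOn ℂ H (ball p r₀) ∧ (∀ z ∈ ball p r₀, f^[j] (H z) = z) ∧
      H p = f^[N - j] p := by
    intro N hN j hj
    induction j with
    | zero =>
      exact ⟨id, differentiableOn_id, fun z hz => rfl, by simpa using hN.symm⟩
    | succ j ih =>
      obtain ⟨H, hHd, hHinv, hHp⟩ := ih (le_trans (Nat.le_succ j) hj)
      have hHa : ∀ z ∈ ball p r₀, H z ≠ a := hHa' j H hHinv
      obtain ⟨L, hLd, hLkey⟩ := exists_log_on_ball hr₀ (hHd.sub_const a)
        (fun z hz => sub_ne_zero.2 (hHa z hz))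
      have hc' : f (f^[N - (j+1)] p) = f^[N - j] p := by
        rw [← Function.iterate_succ_apply' f]
        congr 1
        omega
      have hexp : Complex.exp (f^[N - (j+1)] p) = H p - a := by
        have h2 : f (f^[N - (j+1)] p) = Complex.exp (f^[N - (j+1)] p) + a := rfl
        rw [hHp, ← hc', h2]
        ring
      have h3 : Complex.exp (f^[N - (j+1)] p) = Complex.exp (L p) := by
        rw [hexp, hLkey p hpball]
      obtain ⟨t, ht⟩ := Complex.exp_eq_exp_iff_exists_int.1 h3
      refine ⟨fun z => L z + t * (2 * Real.pi * Complex.I), hLd.add_const _, ?_, ?_⟩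
      · intro z hz
        have h4 : f (L z + t * (2 * Real.pi * Complex.I)) = H z := by
          show Complex.exp (L z + t * (2 * Real.pi * Complex.I)) + a = H z
          rw [Complex.exp_add, Complex.exp_int_mul_two_pi_mul_I, mul_one, hLkey z hz]
          ring
        rw [Function.iterate_succ_apply, h4]
        exact hHinv z hz
      · simp only
        rw [← ht]
  -- the key quantitative bound
  set lam := deriv (f^[m]) p with hlamdef
  have hlamne : lam ≠ 0 := deriv_iterate_ne_zero a m p
  have hbnd : ∀ n : ℕ, r₀/2 ≤ 300 * ‖p - a‖ * ‖lam‖^n := by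
    intro n
    have hNfix : f^[m*n] p = p := by
      rw [Function.iterate_mul]
      exact Function.iterate_fixed hper n
    obtain ⟨H, hHd, hHinv, hHp⟩ := branch (m*n) hNfix (m*n) le_rfl
    rw [Nat.sub_self, Function.iterate_zero_apply] at hHp
    have hinj : InjOn H (ball p r₀) := by
      intro x hx y hy hxy
      have h1 := hHinv x hx
      rw [hxy] at h1
      rw [hHinv y hy] at h1
      exact h1.symm
    have h2req : (2:ℝ) * (r₀/2) = r₀ := by ring
    have hkoebe := weak_koebe (show (0:ℝ) < r₀/2 by linarith)
      (H := H) (ω := a)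
      (by rw [h2req]; exact hHd)
      (by rw [h2req]; exact hinj)
      (by rw [h2req]; exact hHa' (m*n) H hHinv)
    have hdiffH : DifferentiableAt ℂ H p :=
      hHd.differentiableAt (isOpen_ball.mem_nhds hpball)
    have hev : (fun z => f^[m*n] (H z)) =ᶠ[𝓝 p] id := by
      filter_upwards [isOpen_ball.mem_nhds hpball] with z hz
      exact hHinv z hz
    have hderiv1 : deriv (fun z => f^[m*n] (H z)) p = 1 := by
      rw [hev.deriv_eq]; exact deriv_id p
    have hcomp : deriv (f^[m*n]) (H p) * deriv H p = 1 := by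
      rw [← hderiv1]
      exact (deriv_comp p ((differentiable_expMap_iterate a (m*n)).differentiableAt)
        hdiffH).symm
    rw [hHp] at hcomp
    have hdN : deriv (f^[m*n]) p = lam^n := by
      rw [Function.iterate_mul]
      exact deriv_iterate_fixed (differentiable_expMap_iterate a m) hper n
    rw [hdN] at hcomp
    have hnormeq : ‖lam‖^n * ‖deriv H p‖ = 1 := by
      rw [← norm_pow, ← norm_mul, hcomp, norm_one]
    rw [hHp] at hkoebe
    have hl0 : (0:ℝ) ≤ ‖lam‖^n := by positivity
    calc r₀/2 = (r₀/2) * (‖lam‖^n * ‖deriv H p‖) := by rw [hnormeq, mul_one]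
      _ = ((r₀/2) * ‖deriv H p‖) * ‖lam‖^n := by ring
      _ ≤ (300 * ‖p - a‖) * ‖lam‖^n := mul_le_mul_of_nonneg_right hkoebe hl0
      _ = 300 * ‖p - a‖ * ‖lam‖^n := by ring
  -- contradiction
  have htend : Tendsto (fun n => 300 * ‖p - a‖ * ‖lam‖^n) atTop (nhds 0) := by
    have := (tendsto_pow_atTop_nhds_zero_of_lt_one (norm_nonneg lam)
      hattr').const_mul (300 * ‖p - a‖)
    simpa using this
  have hev2 : ∀ᶠ n in atTop, 300 * ‖p - a‖ * ‖lam‖^n < r₀/2 :=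
    htend.eventually (gt_mem_nhds (show (0:ℝ) < r₀/2 by linarith))
  obtain ⟨n, hn⟩ := hev2.exists
  linarith [hbnd n]
end
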